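/- arXiv:1608.03820 — 5 statements merged into one kernel-verified Lean document; each statement's English description precedes it below -/
import Mathlib

section
/- For any finite field F_Q of order Q and any γ ∈ [0,1], the optimal classical winning probability of the CHSH_Q^γ game (where each player independently receives 0 with probability γ and each nonzero element with probability (1-γ)/(Q-1), they output a,b ∈ F_Q without communicating, and win iff a+b = x·y) is at least the optimal classical winning probability of the standard CHSH_Q game (uniform inputs). -/
open Finset

/-- Winning probability of a deterministic CHSH_Q strategy (uniform inputs). -/
noncomputable def chshProb (F : Type*) [Field F] [Fintype F] [DecidableEq F]
    (s1 s2 : F → F) : ℝ :=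
  ((Finset.univ.filter (fun p : F × F => s1 p.1 + s2 p.2 = p.1 * p.2)).card : ℝ) /
    (Fintype.card F : ℝ) ^ 2

/-- The classical value of the CHSH_Q game. -/
noncomputable def omegaCHSH (F : Type*) [Field F] [Fintype F] [DecidableEq F] : ℝ :=
  sSup {p : ℝ | ∃ s1 s2 : F → F, p = chshProb F s1 s2}

/-- The biased input distribution of CHSH_Q^γ: 0 with probability γ, each nonzero element
with probability (1-γ)/(Q-1). -/
noncomputable def biasedWeight (F : Type*) [Field F] [Fintype F] [DecidableEq F]
    (γ : ℝ) (x : F) : ℝ :=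
  if x = 0 then γ else (1 - γ) / ((Fintype.card F : ℝ) - 1)

/-- Winning probability of a deterministic strategy in the game CHSH_Q^γ. -/
noncomputable def chshProbBiased (F : Type*) [Field F] [Fintype F] [DecidableEq F]
    (γ : ℝ) (s1 s2 : F → F) : ℝ :=
  ∑ x : F, ∑ y : F, biasedWeight F γ x * biasedWeight F γ y *
    (if s1 x + s2 y = x * y then (1 : ℝ) else 0)

/-- The classical value of the game CHSH_Q^γ. -/
noncomputable def omegaCHSHBiased (F : Type*) [Field F] [Fintype F] [DecidableEq F]
    (γ : ℝ) : ℝ :=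
  sSup {p : ℝ | ∃ s1 s2 : F → F, p = chshProbBiased F γ s1 s2}

section Aux

variable (F : Type*) [Field F] [Fintype F] [DecidableEq F]

lemma biasedWeight_nonneg (γ : ℝ) (hγ0 : 0 ≤ γ) (hγ1 : γ ≤ 1) (x : F) :
    0 ≤ biasedWeight F γ x := by
  unfold biasedWeight
  split
  · exact hγ0
  · apply div_nonneg (by linarith)
    have h2 : (2 : ℕ) ≤ Fintype.card F := Fintype.one_lt_card
    have : (2 : ℝ) ≤ (Fintype.card F : ℝ) := by exact_mod_cast h2
    linarith

lemma sum_biasedWeight (γ : ℝ) : ∑ x : F, biasedWeight F γ x = 1 := by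
  have h2 : (2 : ℕ) ≤ Fintype.card F := Fintype.one_lt_card
  have h2' : (2 : ℝ) ≤ (Fintype.card F : ℝ) := by exact_mod_cast h2
  have hc : ((Fintype.card F : ℝ) - 1) ≠ 0 := by linarith
  set d : ℝ := (1 - γ) / ((Fintype.card F : ℝ) - 1) with hd
  have h1 : ∀ x : F, biasedWeight F γ x = d + (if x = 0 then γ - d else 0) := by
    intro x; unfold biasedWeight; split <;> ring
  rw [Finset.sum_congr rfl fun x _ => h1 x, Finset.sum_add_distrib,
    Finset.sum_const, Finset.sum_ite_eq' Finset.univ (0 : F) (fun _ => γ - d)]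
  simp only [Finset.mem_univ, if_true, Finset.card_univ, nsmul_eq_mul]
  rw [hd]
  field_simp
  ring

lemma sum_biasedWeight_shift (γ : ℝ) (u : F) :
    ∑ c : F, biasedWeight F γ (u - c) = 1 := by
  rw [Fintype.sum_equiv (Equiv.subLeft u) (fun c => biasedWeight F γ (u - c))
    (biasedWeight F γ) (fun c => rfl)]
  exact sum_biasedWeight F γ

lemma chshProbBiased_le_one (γ : ℝ) (hγ0 : 0 ≤ γ) (hγ1 : γ ≤ 1) (t1 t2 : F → F) :
    chshProbBiased F γ t1 t2 ≤ 1 := by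
  unfold chshProbBiased
  have h1 : ∑ x : F, ∑ y : F, biasedWeight F γ x * biasedWeight F γ y *
      (if t1 x + t2 y = x * y then (1 : ℝ) else 0)
      ≤ ∑ x : F, ∑ y : F, biasedWeight F γ x * biasedWeight F γ y := by
    refine Finset.sum_le_sum fun x _ => Finset.sum_le_sum fun y _ => ?_
    have hw : 0 ≤ biasedWeight F γ x * biasedWeight F γ y :=
      mul_nonneg (biasedWeight_nonneg F γ hγ0 hγ1 x) (biasedWeight_nonneg F γ hγ0 hγ1 y)
    have : (if t1 x + t2 y = x * y then (1 : ℝ) else 0) ≤ 1 := by split <;> norm_num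
    calc biasedWeight F γ x * biasedWeight F γ y *
        (if t1 x + t2 y = x * y then (1 : ℝ) else 0)
        ≤ biasedWeight F γ x * biasedWeight F γ y * 1 := by
          exact mul_le_mul_of_nonneg_left this hw
      _ = biasedWeight F γ x * biasedWeight F γ y := by ring
  calc _ ≤ ∑ x : F, ∑ y : F, biasedWeight F γ x * biasedWeight F γ y := h1
    _ = (∑ x : F, biasedWeight F γ x) * (∑ y : F, biasedWeight F γ y) := by
        rw [Finset.sum_mul_sum]
    _ = 1 := by rw [sum_biasedWeight F γ]; ring

lemma exists_biased_ge (γ : ℝ) (s1 s2 : F → F) :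
    ∃ t1 t2 : F → F, chshProb F s1 s2 ≤ chshProbBiased F γ t1 t2 := by
  set g : F × F → ℝ := fun cd =>
    chshProbBiased F γ (fun x => s1 (x + cd.1) - x * cd.2 - cd.1 * cd.2)
      (fun y => s2 (y + cd.2) - cd.1 * y) with hg
  have hval : ∀ cd : F × F, g cd =
      ∑ u : F, ∑ v : F, biasedWeight F γ (u - cd.1) * biasedWeight F γ (v - cd.2) *
        (if s1 u + s2 v = u * v then (1 : ℝ) else 0) := by
    rintro ⟨c, d⟩
    simp only [hg, chshProbBiased]
    refine Fintype.sum_equiv (Equiv.addRight c) _ _ fun x => ?_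
    refine Fintype.sum_equiv (Equiv.addRight d) _ _ fun y => ?_
    simp only [Equiv.coe_addRight, add_sub_cancel_right]
    have hiff : (s1 (x + c) - x * d - c * d) + (s2 (y + d) - c * y) = x * y ↔
        s1 (x + c) + s2 (y + d) = (x + c) * (y + d) := by
      constructor <;> intro h <;> linear_combination h
    rw [if_congr hiff rfl rfl]
    congr
  have hsum : ∑ cd : F × F, g cd =
      ((Finset.univ.filter (fun p : F × F => s1 p.1 + s2 p.2 = p.1 * p.2)).card : ℝ) := by
    calc ∑ cd : F × F, g cd
        = ∑ cd : F × F, ∑ u : F, ∑ v : F,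
            biasedWeight F γ (u - cd.1) * biasedWeight F γ (v - cd.2) *
            (if s1 u + s2 v = u * v then (1 : ℝ) else 0) :=
          Finset.sum_congr rfl fun cd _ => hval cd
      _ = ∑ u : F, ∑ v : F, ∑ cd : F × F,
            biasedWeight F γ (u - cd.1) * biasedWeight F γ (v - cd.2) *
            (if s1 u + s2 v = u * v then (1 : ℝ) else 0) := by
          rw [Finset.sum_comm]
          exact Finset.sum_congr rfl fun u _ => Finset.sum_comm
      _ = ∑ u : F, ∑ v : F, (if s1 u + s2 v = u * v then (1 : ℝ) else 0) := by
          refine Finset.sum_congr rfl fun u _ => Finset.sum_congr rfl fun v _ => ?_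
          rw [Fintype.sum_prod_type]
          have : ∑ c : F, ∑ d : F,
              biasedWeight F γ (u - c) * biasedWeight F γ (v - d) *
              (if s1 u + s2 v = u * v then (1 : ℝ) else 0)
              = ((∑ c : F, biasedWeight F γ (u - c)) * (∑ d : F, biasedWeight F γ (v - d))) *
                (if s1 u + s2 v = u * v then (1 : ℝ) else 0) := by
            rw [Finset.sum_mul_sum, Finset.sum_mul]
            exact Finset.sum_congr rfl fun c _ => by rw [Finset.sum_mul]
          rw [this, sum_biasedWeight_shift F γ u, sum_biasedWeight_shift F γ v, one_mul, one_mul]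
      _ = ((Finset.univ.filter (fun p : F × F => s1 p.1 + s2 p.2 = p.1 * p.2)).card : ℝ) := by
          rw [← Fintype.sum_prod_type', Finset.sum_boole]
  have hQ : (0 : ℝ) < (Fintype.card F : ℝ) := by
    exact_mod_cast Fintype.card_pos
  have havg : ∑ _cd : F × F, chshProb F s1 s2 ≤ ∑ cd : F × F, g cd := by
    rw [hsum, Finset.sum_const, Finset.card_univ, Fintype.card_prod, nsmul_eq_mul]
    unfold chshProb
    push_cast
    apply le_of_eq
    have hQ' : (Fintype.card F : ℝ) ≠ 0 := hQ.ne'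
    field_simp
  obtain ⟨cd, _, hcd⟩ := Finset.exists_le_of_sum_le Finset.univ_nonempty havg
  exact ⟨_, _, hcd⟩

end Aux

/-- for any γ ∈ [0,1], ω(CHSH_Q^γ) ≥ ω(CHSH_Q). -/
theorem omegaCHSHBiased_ge_omegaCHSH (F : Type*) [Field F] [Fintype F] [DecidableEq F]
    (γ : ℝ) (hγ0 : 0 ≤ γ) (hγ1 : γ ≤ 1) :
    omegaCHSH F ≤ omegaCHSHBiased F γ := by
  unfold omegaCHSH omegaCHSHBiased
  have hbdd : BddAbove {p : ℝ | ∃ s1 s2 : F → F, p = chshProbBiased F γ s1 s2} := by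
    refine ⟨1, ?_⟩
    rintro p ⟨t1, t2, rfl⟩
    exact chshProbBiased_le_one F γ hγ0 hγ1 t1 t2
  refine csSup_le ⟨chshProb F id id, id, id, rfl⟩ ?_
  rintro p ⟨s1, s2, rfl⟩
  obtain ⟨t1, t2, ht⟩ := exists_biased_ge F γ s1 s2
  exact ht.trans (le_csSup hbdd ⟨t1, t2, rfl⟩)
end

section
/- For the multi-round F_Q bit commitment protocol, the maximal cheating probabilities satisfy g_m ≤ g'_m for all m ≥ 2, where g_m is the maximal cheating probability for the m-round protocol P_m and g'_m is the maximal cheating probability for the symmetrized protocol P'_m. Concretely: let a strategy for P_m be a tuple of functions S = (s_1,...,s_m) with s_1 : F_Q → F_Q and s_i : {0,1} × F_Q^{i-2} × F_Q → F_Q for i ≥ 2 (output y_i depends on d, x_1,...,x_{i-2}, x_i with the convention x_0 = d), with winning condition C_m: y_m = y_{m-1} − x_{m-1}(y_{m-2} − x_{m-2}(... − x_2(y_1 − d·x_1)...)). Let a strategy for P'_m be analogous with winning condition C'_m: y_m = x_m·(y_{m-1} − x_{m-1}(... − x_2(y_1 − d·x_1)...)), where additionally y_m may depend on x_m. Then max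 over strategies of Pr_{d,x_1,...,x_{m-1}}[C_m] ≤ max over strategies of Pr_{d,x_1,...,x_m}[C'_m], where d is a uniform bit and the x_i are uniform in F_Q. -/
open Finset

/-- Embed the inputs x₁,…,xₙ (given as a vector) into a function ℕ → F (0 elsewhere). -/
def extendVec {F : Type*} [Field F] (n : ℕ) (v : Fin n → F) : ℕ → F :=
  fun i => if h : 1 ≤ i ∧ i ≤ n then v ⟨i - 1, by omega⟩ else 0

/-- The recursively rolled-up check value: α₀ = d, αᵢ = yᵢ − xᵢ·αᵢ₋₁. -/
def alphaRec {F : Type*} [Field F] (d : F) (x y : ℕ → F) : ℕ → F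
  | 0 => d
  | i + 1 => y (i + 1) - x (i + 1) * alphaRec d x y i

/-- The committed bit viewed as a field element. -/
def bitF (F : Type*) [Field F] (d : Bool) : F := if d then 1 else 0

/-- A valid (relativistic) cheating strategy: the round-1 answer depends only on x₁, and the
round-i answer depends only on d, x₁,…,x_{i−2} and xᵢ. -/
def ValidStrategy {F : Type*} [Field F] (S : ℕ → F → (ℕ → F) → F) : Prop :=
  (∀ d d' x, S 1 d x = S 1 d' x) ∧
  (∀ i d x x', (∀ j, j + 2 ≤ i → x j = x' j) → x i = x' i → S i d x = S i d x')

/-- Winning condition of the m-round protocol P_m: y_m = α_{m−1}. -/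
def winP {F : Type*} [Field F] (m : ℕ) (S : ℕ → F → (ℕ → F) → F)
    (d : Bool) (v : Fin (m - 1) → F) : Prop :=
  let x := extendVec (m - 1) v
  let y := fun i => S i (bitF F d) x
  y m = alphaRec (bitF F d) x y (m - 1)

/-- Winning condition of the symmetrized m-round protocol P'_m: y_m = x_m·α_{m−1}. -/
def winP' {F : Type*} [Field F] (m : ℕ) (S : ℕ → F → (ℕ → F) → F)
    (d : Bool) (v : Fin m → F) : Prop :=
  let x := extendVec m v
  let y := fun i => S i (bitF F d) x
  y m = x m * alphaRec (bitF F d) x y (m - 1)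

open scoped Classical in
/-- Winning probability of a strategy in P_m, for uniform d and x₁,…,x_{m−1}. -/
noncomputable def probP (F : Type*) [Field F] [Fintype F] [DecidableEq F]
    (m : ℕ) (S : ℕ → F → (ℕ → F) → F) : ℝ :=
  ((Finset.univ.filter (fun p : Bool × (Fin (m - 1) → F) => winP m S p.1 p.2)).card : ℝ) /
    (Fintype.card (Bool × (Fin (m - 1) → F)) : ℝ)

open scoped Classical in
/-- Winning probability of a strategy in P'_m, for uniform d and x₁,…,x_m. -/
noncomputable def probP' (F : Type*) [Field F] [Fintype F] [DecidableEq F]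
    (m : ℕ) (S : ℕ → F → (ℕ → F) → F) : ℝ :=
  ((Finset.univ.filter (fun p : Bool × (Fin m → F) => winP' m S p.1 p.2)).card : ℝ) /
    (Fintype.card (Bool × (Fin m → F)) : ℝ)

/-- g_m: Alice's maximal cheating probability in P_m. -/
noncomputable def gP (F : Type*) [Field F] [Fintype F] [DecidableEq F] (m : ℕ) : ℝ :=
  sSup {p : ℝ | ∃ S, ValidStrategy S ∧ p = probP F m S}

/-- g'_m: Alice's maximal cheating probability in P'_m. -/
noncomputable def gP' (F : Type*) [Field F] [Fintype F] [DecidableEq F] (m : ℕ) : ℝ :=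
  sSup {p : ℝ | ∃ S, ValidStrategy S ∧ p = probP' F m S}

lemma alphaRec_congr {F : Type*} [Field F] (d : F) {x x' y y' : ℕ → F} (n : ℕ)
    (hx : ∀ i, 1 ≤ i → i ≤ n → x i = x' i) (hy : ∀ i, 1 ≤ i → i ≤ n → y i = y' i) :
    alphaRec d x y n = alphaRec d x' y' n := by
  induction n with
  | zero => rfl
  | succ n ih =>
    simp only [alphaRec]
    rw [hx (n+1) (by omega) le_rfl, hy (n+1) (by omega) le_rfl,
      ih (fun i h1 h2 => hx i h1 (by omega)) (fun i h1 h2 => hy i h1 (by omega))]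

lemma extendVec_snoc_eq {F : Type*} [Field F] (k : ℕ) (v : Fin (k+1) → F) (a : F) :
    ∀ i, i ≤ k + 1 → extendVec (k+2) (Fin.snoc v a) i = extendVec (k+1) v i := by
  intro i hi
  unfold extendVec
  by_cases h1 : 1 ≤ i
  · rw [dif_pos ⟨h1, by omega⟩, dif_pos ⟨h1, hi⟩]
    have hlt : i - 1 < k + 1 := by omega
    simp [Fin.snoc, hlt]
  · rw [dif_neg (by omega), dif_neg (by omega)]

lemma extendVec_snoc_last {F : Type*} [Field F] (k : ℕ) (v : Fin (k+1) → F) (a : F) :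
    extendVec (k+2) (Fin.snoc v a) (k+2) = a := by
  unfold extendVec
  rw [dif_pos ⟨by omega, le_rfl⟩]
  have : ¬ (k + 2 - 1 < k + 1) := by omega
  simp [Fin.snoc, this]

lemma extendVec_gt {F : Type*} [Field F] (n i : ℕ) (v : Fin n → F) (hi : n < i) :
    extendVec n v i = 0 := by
  unfold extendVec
  rw [dif_neg (by omega)]

open scoped Classical in
lemma probP'_le_one (F : Type*) [Field F] [Fintype F] [DecidableEq F]
    (m : ℕ) (S : ℕ → F → (ℕ → F) → F) : probP' F m S ≤ 1 := by
  unfold probP'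
  have hpos : (0:ℝ) < (Fintype.card (Bool × (Fin m → F)) : ℝ) := by
    exact_mod_cast Fintype.card_pos
  rw [div_le_one hpos]
  exact_mod_cast Finset.card_filter_le _ _

open scoped Classical in
lemma probP'_nonneg (F : Type*) [Field F] [Fintype F] [DecidableEq F]
    (m : ℕ) (S : ℕ → F → (ℕ → F) → F) : 0 ≤ probP' F m S := by
  unfold probP'
  positivity

/-- symmetrization, first inequality: g_m ≤ g'_m for all m ≥ 2. -/
theorem gP_le_gP' (F : Type*) [Field F] [Fintype F] [DecidableEq F]
    (m : ℕ) (hm : 2 ≤ m) : gP F m ≤ gP' F m := by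
  classical
  obtain ⟨k, rfl⟩ := Nat.exists_eq_add_of_le' hm
  apply Real.sSup_le
  · rintro p ⟨S, hS, rfl⟩
    -- the modified strategy for P'_{k+2}
    set S' : ℕ → F → (ℕ → F) → F := fun i d x =>
      if i = k + 2 then x (k+2) * S (k+2) d (Function.update x (k+2) 0) else S i d x with hS'def
    have hS' : ValidStrategy S' := by
      constructor
      · intro d d' x
        simp only [hS'def]
        rw [if_neg (by omega), if_neg (by omega)]
        exact hS.1 d d' x
      · intro i d x x' hj hi
        simp only [hS'def]
        by_cases h : i = k + 2
        · subst h
          rw [if_pos rfl, if_pos rfl, hi]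
          congr 1
          apply hS.2
          · intro j hjle
            have hne : j ≠ k + 2 := by omega
            rw [Function.update_of_ne hne, Function.update_of_ne hne]
            exact hj j hjle
          · simp
        · rw [if_neg h, if_neg h]
          exact hS.2 i d x x' hj hi
    -- key counting inequality
    have hcard :
        (Finset.univ.filter (fun p : Bool × (Fin (k + 2 - 1) → F) => winP (k+2) S p.1 p.2)).card
          * Fintype.card F ≤
        (Finset.univ.filter (fun p : Bool × (Fin (k + 2) → F) => winP' (k+2) S' p.1 p.2)).card := by
      have hk1 : k + 2 - 1 = k + 1 := rfl
      rw [← Finset.card_univ (α := F), ← Finset.card_product]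
      apply Finset.card_le_card_of_injOn
        (fun q : (Bool × (Fin (k + 2 - 1) → F)) × F => (q.1.1, Fin.snoc q.1.2 q.2))
      · rintro ⟨⟨d, v⟩, a⟩ hq
        simp only [Finset.mem_coe, Finset.mem_product, Finset.mem_filter, Finset.mem_univ, true_and] at hq ⊢
        obtain ⟨hwin, -⟩ := hq
        -- unfold winning conditions
        set D := bitF F d with hD
        set x : ℕ → F := extendVec (k+2) (Fin.snoc v a) with hx
        set xP : ℕ → F := extendVec (k+1) v with hxP
        have h1 : ∀ i, i ≤ k + 1 → x i = xP i := extendVec_snoc_eq k v a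
        have hy : ∀ i, i ≤ k + 1 → S' i D x = S i D xP := by
          intro i hi
          have hne : i ≠ k + 2 := by omega
          simp only [hS'def, if_neg hne]
          apply hS.2
          · intro j hjle
            exact h1 j (by omega)
          · exact h1 i hi
        have halpha : alphaRec D x (fun i => S' i D x) (k+1)
            = alphaRec D xP (fun i => S i D xP) (k+1) :=
          alphaRec_congr D (k+1) (fun i hi1 hi2 => h1 i hi2) (fun i hi1 hi2 => hy i hi2)
        have hupd : Function.update x (k+2) 0 = xP := by
          funext j
          by_cases hjk : j = k + 2
          · subst hjk
            rw [Function.update_self]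
            exact (extendVec_gt (k+1) (k+2) v (by omega)).symm
          · rw [Function.update_of_ne hjk]
            by_cases hle : j ≤ k + 1
            · exact h1 j hle
            · show extendVec (k+2) (Fin.snoc v a) j = extendVec (k+1) v j
              rw [extendVec_gt (k+2) j _ (by omega), extendVec_gt (k+1) j v (by omega)]
        have hwinP : S (k+2) D xP = alphaRec D xP (fun i => S i D xP) (k+1) := hwin
        have hL : S' (k+2) D x = x (k+2) * S (k+2) D xP := by
          simp only [hS'def]
          rw [if_pos trivial, hupd]
        show S' (k+2) D x = x (k+2) * alphaRec D x (fun i => S' i D x) (k+1)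
        rw [hL, halpha, hwinP]
      · rintro ⟨⟨d, v⟩, a⟩ - ⟨⟨d', v'⟩, a'⟩ - h
        simp only [Prod.mk.injEq] at h
        obtain ⟨hd, hsnoc⟩ := h
        have ha : a = a' := by
          have := congrFun hsnoc (Fin.last (k+1))
          simpa using this
        have hv : v = v' := by
          funext i
          have := congrFun hsnoc (Fin.castSucc i)
          simpa using this
        simp [hd, ha, hv]
    -- turn the counting inequality into the probability inequality
    have hle : probP F (k+2) S ≤ probP' F (k+2) S' := by
      unfold probP probP'
      have hQ : (0:ℝ) < (Fintype.card F : ℝ) := by exact_mod_cast Fintype.card_pos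
      have hc1 : (Fintype.card (Bool × (Fin (k + 2 - 1) → F)) : ℝ)
          = 2 * (Fintype.card F : ℝ) ^ (k+1) := by
        simp [Fintype.card_prod, Fintype.card_fun]
      have hc2 : (Fintype.card (Bool × (Fin (k + 2) → F)) : ℝ)
          = 2 * (Fintype.card F : ℝ) ^ (k+2) := by
        simp [Fintype.card_prod, Fintype.card_fun]
      rw [hc1, hc2, div_le_div_iff₀ (by positivity) (by positivity)]
      have key : ((Finset.univ.filter
          (fun p : Bool × (Fin (k + 2 - 1) → F) => winP (k+2) S p.1 p.2)).card : ℝ)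
          * (Fintype.card F : ℝ) ≤
          ((Finset.univ.filter
          (fun p : Bool × (Fin (k + 2) → F) => winP' (k+2) S' p.1 p.2)).card : ℝ) := by
        exact_mod_cast hcard
      have hpow : (0:ℝ) ≤ (Fintype.card F : ℝ) ^ (k+1) := by positivity
      have : (Fintype.card F : ℝ) ^ (k+2) = (Fintype.card F : ℝ) ^ (k+1) * (Fintype.card F : ℝ) :=
        pow_succ _ _
      nlinarith [key, hpow, hQ.le]
    refine le_trans hle (le_csSup ?_ ⟨S', hS', rfl⟩)
    exact ⟨1, by rintro q ⟨T, hT, rfl⟩; exact probP'_le_one F (k+2) T⟩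
  · apply Real.sSup_nonneg
    rintro p ⟨S, hS, rfl⟩
    exact probP'_nonneg F (k+2) S
end

section
/- There exists a cheating strategy for the 3-round symmetrized F_Q protocol P'_3 achieving success probability at least 1 − (1/2)(1 − 1/Q)(1 − ω(CHSH_Q)). Concretely: let s1, s2 : F_Q → F_Q be an optimal strategy for CHSH_Q. Define ỹ_1 = 0, ỹ_2 = d·s2(x_2), ỹ_3 = x_3·d·s1(x_1). Then Pr_{d,x_1,x_2,x_3}[ỹ_3 + x_3·ỹ_2 + x_3·x_2·ỹ_1 = x_3·x_2·x_1·d] ≥ 1 − (1/2)(1 − 1/Q)(1 − ω(CHSH_Q)), where d is a uniform bit (viewed in F_Q) and x_1, x_2, x_3 are independent uniform elements of F_Q. -/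
open Finset

/-- using an optimal CHSH_Q strategy (s1, s2), the 3-round strategy
ỹ₁ = 0, ỹ₂ = d·s2(x₂), ỹ₃ = x₃·d·s1(x₁) wins P'₃ (i.e. satisfies
ỹ₃ + x₃·ỹ₂ + x₃·x₂·ỹ₁ = x₃·x₂·x₁·d) with probability at least
1 − (1/2)(1 − 1/Q)(1 − ω(CHSH_Q)). -/
theorem three_round_attack (F : Type*) [Field F] [Fintype F] [DecidableEq F]
    (s1 s2 : F → F) (hopt : chshProb F s1 s2 = omegaCHSH F) :
    ((Finset.univ.filter (fun ω : Bool × (F × F × F) =>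
        let d := bitF F ω.1
        let x1 := ω.2.1
        let x2 := ω.2.2.1
        let x3 := ω.2.2.2
        (x3 * (d * s1 x1)) + x3 * (d * s2 x2) + x3 * x2 * (0 : F)
          = x3 * x2 * x1 * d)).card : ℝ) /
      (Fintype.card (Bool × (F × F × F)) : ℝ)
    ≥ 1 - (1 / 2) * (1 - 1 / (Fintype.card F : ℝ)) * (1 - omegaCHSH F) := by
  classical
  rw [← hopt, ge_iff_le]
  set Q : ℝ := (Fintype.card F : ℝ) with hQdef
  have hQ0 : (0:ℝ) < Q := by rw [hQdef]; exact_mod_cast Fintype.card_pos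
  set N : ℕ := (Finset.univ.filter (fun p : F × F => s1 p.1 + s2 p.2 = p.1 * p.2)).card with hN
  have hNQ : ((Finset.univ.filter (fun p : F × F => s1 p.1 + s2 p.2 = p.1 * p.2)).card : ℝ) = N := by
    rw [hN]
  have hcard : ((Finset.univ.filter (fun ω : Bool × (F × F × F) =>
        let d := bitF F ω.1
        let x1 := ω.2.1
        let x2 := ω.2.2.1
        let x3 := ω.2.2.2
        (x3 * (d * s1 x1)) + x3 * (d * s2 x2) + x3 * x2 * (0 : F)
          = x3 * x2 * x1 * d)).card : ℝ)
      = Q ^ 3 + (Q ^ 2 + (Q - 1) * N) := by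
    rw [← Finset.sum_boole]
    rw [Fintype.sum_prod_type]
    rw [Fintype.sum_bool]
    have hfalse : (∑ x : F × F × F,
        (if (x.2.2 * (bitF F false * s1 x.1)) + x.2.2 * (bitF F false * s2 x.2.1)
            + x.2.2 * x.2.1 * (0 : F) = x.2.2 * x.2.1 * x.1 * bitF F false then (1:ℝ) else 0))
        = Q ^ 3 := by
      have hb : bitF F false = 0 := rfl
      simp only [hb, mul_zero, zero_mul, add_zero, if_pos rfl]
      simp [hQdef]
      ring
    have htrue : (∑ x : F × F × F,
        (if (x.2.2 * (bitF F true * s1 x.1)) + x.2.2 * (bitF F true * s2 x.2.1)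
            + x.2.2 * x.2.1 * (0 : F) = x.2.2 * x.2.1 * x.1 * bitF F true then (1:ℝ) else 0))
        = Q ^ 2 + (Q - 1) * N := by
      have hb : bitF F true = 1 := rfl
      simp only [hb, one_mul, mul_one, mul_zero, add_zero]
      rw [Fintype.sum_prod_type]
      have inner : ∀ x1 : F, (∑ y : F × F,
          (if y.2 * s1 x1 + y.2 * s2 y.1 = y.2 * y.1 * x1 then (1:ℝ) else 0))
          = ∑ x2 : F, (if s1 x1 + s2 x2 = x1 * x2 then Q else 1) := by
        intro x1
        rw [Fintype.sum_prod_type]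
        refine Finset.sum_congr rfl (fun x2 _ => ?_)
        by_cases h : s1 x1 + s2 x2 = x1 * x2
        · rw [if_pos h]
          have hall : ∀ x3 : F, x3 * s1 x1 + x3 * s2 x2 = x3 * x2 * x1 := by
            intro x3
            have : x3 * (s1 x1 + s2 x2) = x3 * (x1 * x2) := by rw [h]
            linear_combination this
          simp [hall, hQdef]
        · rw [if_neg h]
          have hiff : ∀ x3 : F, (x3 * s1 x1 + x3 * s2 x2 = x3 * x2 * x1) ↔ x3 = 0 := by
            intro x3
            constructor
            · intro hx
              by_contra hx3
              apply h
              have h2 : x3 * (s1 x1 + s2 x2) = x3 * (x1 * x2) := by linear_combination hx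
              exact mul_left_cancel₀ hx3 h2
            · rintro rfl; ring
          simp only [hiff]
          simp
      simp only [inner]
      have : ∀ x1 x2 : F, (if s1 x1 + s2 x2 = x1 * x2 then Q else (1:ℝ))
          = (Q - 1) * (if s1 x1 + s2 x2 = x1 * x2 then (1:ℝ) else 0) + 1 := by
        intro x1 x2
        by_cases h : s1 x1 + s2 x2 = x1 * x2 <;> simp [h]
      simp only [this, Finset.sum_add_distrib, ← Finset.mul_sum, Finset.sum_const,
        nsmul_eq_mul, mul_one]
      have hNN : (∑ i : F, ∑ j : F, if s1 i + s2 j = i * j then (1:ℝ) else 0) = (N:ℝ) := by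
        rw [← Finset.sum_product', Finset.univ_product_univ, Finset.sum_boole, hN]
      rw [hNN]
      simp [hQdef, Finset.card_univ]
      ring
    rw [htrue, hfalse]
    ring
  rw [hcard]
  have hcard2 : ((Fintype.card (Bool × (F × F × F))) : ℝ) = 2 * Q ^ 3 := by
    simp [Fintype.card_prod, Fintype.card_bool, hQdef]
    ring
  rw [hcard2]
  have hNnn : (0:ℝ) ≤ N := Nat.cast_nonneg N
  rw [chshProb, hNQ]
  apply le_of_eq
  have hQne : Q ≠ 0 := ne_of_gt hQ0
  field_simp
  ring
end

section
/- For the symmetrized F_Q protocol, the maximal cheating probabilities satisfy the recursion 1 − g'_{k+3} ≤ (1 − 1/Q)(1 − ω(CHSH_Q))·(1 − g'_k) for all k ≥ 2, where g'_k denotes the maximum over cheating strategies of the probability that the k-round winning condition ∑_{i=1}^{k} ỹ_i·∏_{j=i+1}^{k} x_j = d·∏_{j=1}^{k} x_j holds, with d uniform in {0,1} ⊆ F_Q and x_1,...,x_k independent uniform in F_Q, and where a strategy specifies ỹ_i as a function of (d, x_1,...,x_{i-2}, x_i). -/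
open Finset

open scoped Classical in
/-- Winning probability of a strategy in the symmetrized m-round protocol, in sum form:
the outputs ỹᵢ = S i d x must satisfy ∑ᵢ ỹᵢ ∏_{j>i} xⱼ = d ∏ⱼ xⱼ, for uniform d and
x₁,…,x_m. -/
noncomputable def probSym (F : Type*) [Field F] [Fintype F] [DecidableEq F]
    (m : ℕ) (S : ℕ → F → (ℕ → F) → F) : ℝ :=
  ((Finset.univ.filter (fun p : Bool × (Fin m → F) =>
      let x := extendVec m p.2
      let ty := fun i => S i (bitF F p.1) x
      (∑ i ∈ Finset.Icc 1 m, ty i * ∏ j ∈ Finset.Icc (i + 1) m, x j)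
        = bitF F p.1 * ∏ j ∈ Finset.Icc 1 m, x j)).card : ℝ) /
    (Fintype.card (Bool × (Fin m → F)) : ℝ)

/-- g'_m: Alice's maximal cheating probability in the symmetrized m-round protocol. -/
noncomputable def gSym (F : Type*) [Field F] [Fintype F] [DecidableEq F] (m : ℕ) : ℝ :=
  sSup {p : ℝ | ∃ S, ValidStrategy S ∧ p = probSym F m S}

set_option linter.unusedSectionVars false

def etaS {F : Type*} [Field F] (S : ℕ → F → (ℕ → F) → F) (k : ℕ) (d : F) (x : ℕ → F) : F :=
  d * ∏ j ∈ Icc 1 k, x j - ∑ i ∈ Icc 1 k, S i d x * ∏ j ∈ Icc (i+1) k, x j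

def extS {F : Type*} [Field F] (S : ℕ → F → (ℕ → F) → F) (s1 s2 : F → F) (k : ℕ) :
    ℕ → F → (ℕ → F) → F :=
  fun i d x =>
    if i = k+1 then 0
    else if i = k+2 then etaS S k d x * s1 (x (k+2))
    else if i = k+3 then etaS S k d x * s2 (x (k+1)) * x (k+3)
    else S i d x

lemma extS_ne {F : Type*} [Field F] (S : ℕ → F → (ℕ → F) → F) (s1 s2 : F → F) (k i : ℕ)
    (h1 : i ≠ k+1) (h2 : i ≠ k+2) (h3 : i ≠ k+3) (d : F) (x : ℕ → F) :
    extS S s1 s2 k i d x = S i d x := by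
  simp only [extS, if_neg h1, if_neg h2, if_neg h3]

lemma extS_1 {F : Type*} [Field F] (S : ℕ → F → (ℕ → F) → F) (s1 s2 : F → F) (k : ℕ)
    (d : F) (x : ℕ → F) : extS S s1 s2 k (k+1) d x = 0 := by
  simp only [extS, if_true, eq_self_iff_true, if_pos trivial]

lemma extS_2 {F : Type*} [Field F] (S : ℕ → F → (ℕ → F) → F) (s1 s2 : F → F) (k : ℕ)
    (d : F) (x : ℕ → F) : extS S s1 s2 k (k+2) d x = etaS S k d x * s1 (x (k+2)) := by
  simp only [extS, if_neg (by omega : k+2 ≠ k+1), if_pos rfl, if_true]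

lemma extS_3 {F : Type*} [Field F] (S : ℕ → F → (ℕ → F) → F) (s1 s2 : F → F) (k : ℕ)
    (d : F) (x : ℕ → F) :
    extS S s1 s2 k (k+3) d x = etaS S k d x * s2 (x (k+1)) * x (k+3) := by
  simp only [extS, if_neg (by omega : k+3 ≠ k+1), if_neg (by omega : k+3 ≠ k+2), if_pos rfl, if_true]

lemma etaS_congr {F : Type*} [Field F] {S : ℕ → F → (ℕ → F) → F} (hS : ValidStrategy S)
    (k : ℕ) (d : F) (x x' : ℕ → F) (h : ∀ j, j ≤ k → x j = x' j) :
    etaS S k d x = etaS S k d x' := by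
  unfold etaS
  congr 1
  · congr 1
    exact Finset.prod_congr rfl fun j hj => h j (mem_Icc.1 hj).2
  · refine Finset.sum_congr rfl fun i hi => ?_
    have hik := (mem_Icc.1 hi).2
    rw [hS.2 i d x x' (fun j hj => h j (by omega)) (h i hik)]
    congr 1
    exact Finset.prod_congr rfl fun j hj => h j (mem_Icc.1 hj).2

lemma extS_valid {F : Type*} [Field F] {S : ℕ → F → (ℕ → F) → F} (hS : ValidStrategy S)
    (s1 s2 : F → F) {k : ℕ} (hk : 2 ≤ k) : ValidStrategy (extS S s1 s2 k) := by
  constructor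
  · intro d d' x
    rw [extS_ne _ _ _ _ _ (by omega) (by omega) (by omega),
        extS_ne _ _ _ _ _ (by omega) (by omega) (by omega)]
    exact hS.1 d d' x
  · intro i d x x' h1 h2
    by_cases e1 : i = k+1
    · subst e1; rw [extS_1, extS_1]
    by_cases e2 : i = k+2
    · subst e2
      rw [extS_2, extS_2, etaS_congr hS k d x x' (fun j hj => h1 j (by omega)), h2]
    by_cases e3 : i = k+3
    · subst e3
      rw [extS_3, extS_3, etaS_congr hS k d x x' (fun j hj => h1 j (by omega)),
          h1 (k+1) (by omega), h2]
    · rw [extS_ne _ _ _ _ _ e1 e2 e3, extS_ne _ _ _ _ _ e1 e2 e3]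
      exact hS.2 i d x x' h1 h2


lemma sum_Icc_top3 {M : Type*} [AddCommMonoid M] (a k : ℕ) (h : a ≤ k + 1) (f : ℕ → M) :
    ∑ i ∈ Icc a (k+3), f i = (∑ i ∈ Icc a k, f i) + f (k+1) + f (k+2) + f (k+3) := by
  rw [show k+3 = (k+2)+1 by omega, Finset.sum_Icc_succ_top (by omega),
      show k+2 = (k+1)+1 by omega, Finset.sum_Icc_succ_top (by omega),
      Finset.sum_Icc_succ_top (by omega)]

lemma prod_Icc_top3 {M : Type*} [CommMonoid M] (a k : ℕ) (h : a ≤ k + 1) (f : ℕ → M) :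
    ∏ i ∈ Icc a (k+3), f i = (∏ i ∈ Icc a k, f i) * f (k+1) * f (k+2) * f (k+3) := by
  rw [show k+3 = (k+2)+1 by omega, Finset.prod_Icc_succ_top (by omega),
      show k+2 = (k+1)+1 by omega, Finset.prod_Icc_succ_top (by omega),
      Finset.prod_Icc_succ_top (by omega)]

lemma extendVec_eval {F : Type*} [Field F] (n : ℕ) (v : Fin n → F) (j : ℕ)
    (h1 : 1 ≤ j) (h2 : j ≤ n) : extendVec n v j = v ⟨j - 1, by omega⟩ := by
  simp only [extendVec, dif_pos (And.intro h1 h2)]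

lemma win_iff {F : Type*} [Field F] {S : ℕ → F → (ℕ → F) → F} (hS : ValidStrategy S)
    (s1 s2 : F → F) {k : ℕ} (hk : 2 ≤ k) (d : Bool) (v : Fin (k+3) → F) :
    ((∑ i ∈ Icc 1 (k+3), extS S s1 s2 k i (bitF F d) (extendVec (k+3) v)
        * ∏ j ∈ Icc (i+1) (k+3), extendVec (k+3) v j)
      = bitF F d * ∏ j ∈ Icc 1 (k+3), extendVec (k+3) v j)
    ↔ ((∑ i ∈ Icc 1 k,
          S i (bitF F d) (extendVec k (fun t : Fin k => v (Fin.castLE (by omega) t)))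
          * ∏ j ∈ Icc (i+1) k, extendVec k (fun t : Fin k => v (Fin.castLE (by omega) t)) j)
        = bitF F d * ∏ j ∈ Icc 1 k, extendVec k (fun t : Fin k => v (Fin.castLE (by omega) t)) j)
      ∨ (s1 (v ⟨k+1, by omega⟩) + s2 (v ⟨k, by omega⟩) = v ⟨k+1, by omega⟩ * v ⟨k, by omega⟩)
      ∨ v ⟨k+2, by omega⟩ = 0 := by
  set D := bitF F d with hD
  set x : ℕ → F := extendVec (k+3) v with hx
  set x' : ℕ → F := extendVec k (fun t : Fin k => v (Fin.castLE (by omega) t)) with hx'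
  have hagree : ∀ j, j ≤ k → x j = x' j := by
    intro j hj
    rcases Nat.eq_zero_or_pos j with h0 | h0
    · subst h0
      simp [hx, hx', extendVec]
    · rw [hx, hx', extendVec_eval _ _ _ h0 (by omega), extendVec_eval _ _ _ h0 hj]
      rfl
  have hA : x (k+1) = v ⟨k, by omega⟩ := by
    rw [hx, extendVec_eval _ _ _ (by omega) (by omega)]
    exact congrArg v (Fin.ext (by simp))
  have hB : x (k+2) = v ⟨k+1, by omega⟩ := by
    rw [hx, extendVec_eval _ _ _ (by omega) (by omega)]
    exact congrArg v (Fin.ext (by simp))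
  have hC : x (k+3) = v ⟨k+2, by omega⟩ := by
    rw [hx, extendVec_eval _ _ _ (by omega) (by omega)]
    exact congrArg v (Fin.ext (by simp))
  have hS' : ∀ i ∈ Icc 1 k, S i D x = S i D x' := by
    intro i hi
    have hik := (mem_Icc.1 hi).2
    exact hS.2 i D x x' (fun j hj => hagree j (by omega)) (hagree i hik)
  have heta : etaS S k D x
      = D * (∏ j ∈ Icc 1 k, x' j) - ∑ i ∈ Icc 1 k, S i D x' * ∏ j ∈ Icc (i+1) k, x' j := by
    rw [etaS_congr hS k D x x' hagree]
    simp only [etaS]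
  -- split the big sum and products
  rw [sum_Icc_top3 1 k (by omega), prod_Icc_top3 1 k (by omega)]
  rw [extS_1, extS_2, extS_3]
  have hterm : ∀ i ∈ Icc 1 k,
      extS S s1 s2 k i D x * ∏ j ∈ Icc (i+1) (k+3), x j
      = (S i D x' * ∏ j ∈ Icc (i+1) k, x' j) * (x (k+1) * x (k+2) * x (k+3)) := by
    intro i hi
    have h1 := (mem_Icc.1 hi).1
    have h2 := (mem_Icc.1 hi).2
    rw [extS_ne _ _ _ _ _ (by omega) (by omega) (by omega), hS' i hi,
        prod_Icc_top3 (i+1) k (by omega),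
        Finset.prod_congr rfl (fun j hj => hagree j (mem_Icc.1 hj).2)]
    ring
  rw [Finset.sum_congr rfl hterm, ← Finset.sum_mul]
  rw [Finset.prod_congr rfl (fun j hj => hagree j (mem_Icc.1 hj).2)]
  have e1 : ∏ j ∈ Icc (k+3+1) (k+3), x j = 1 := by
    rw [Finset.Icc_eq_empty (by omega)]; exact Finset.prod_empty
  have e2 : ∏ j ∈ Icc (k+2+1) (k+3), x j = x (k+3) := by
    rw [show k+2+1 = k+3 by omega, Finset.Icc_self, Finset.prod_singleton]
  -- now pure algebra
  rw [e1, e2, heta, hA, hB, hC]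
  set A := v ⟨k, by omega⟩
  set B := v ⟨k+1, by omega⟩
  set C := v ⟨k+2, by omega⟩
  set P := ∏ j ∈ Icc 1 k, x' j
  set SK := ∑ i ∈ Icc 1 k, S i D x' * ∏ j ∈ Icc (i+1) k, x' j
  constructor
  · intro h
    have h0 : (D * P - SK) * (C * (A * B - (s1 B + s2 A))) = 0 := by
      linear_combination -h
    rcases mul_eq_zero.1 h0 with h1 | h1
    · exact Or.inl (by linear_combination -h1)
    rcases mul_eq_zero.1 h1 with h2 | h2
    · exact Or.inr (Or.inr h2)
    · exact Or.inr (Or.inl (by linear_combination -h2))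
  · rintro (h | h | h)
    · linear_combination (A*B*C - (s1 B + s2 A) * C) * h
    · linear_combination (D*P - SK) * C * h
    · linear_combination (SK*A*B + (D*P - SK)*s1 B + (D*P - SK)*s2 A - D*P*A*B) * h

open scoped Classical in
lemma card_filter_triple {F : Type*} [Fintype F] (k : ℕ)
    (PK : Bool × (Fin k → F) → Prop) (PC : F × F → Prop) (PZ : F → Prop) :
    (univ.filter (fun p : Bool × (Fin (k+3) → F) =>
        PK (p.1, fun t : Fin k => p.2 (Fin.castLE (by omega) t))
        ∧ PC (p.2 ⟨k+1, by omega⟩, p.2 ⟨k, by omega⟩)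
        ∧ PZ (p.2 ⟨k+2, by omega⟩))).card
      = (univ.filter PK).card * ((univ.filter PC).card * (univ.filter PZ).card) := by
  rw [← Finset.card_product, ← Finset.card_product]
  refine Finset.card_bij'
    (fun p _ => ((p.1, fun t : Fin k => p.2 (Fin.castLE (by omega) t)),
        ((p.2 ⟨k+1, by omega⟩, p.2 ⟨k, by omega⟩), p.2 ⟨k+2, by omega⟩)))
    (fun q _ => (q.1.1, fun t : Fin (k+3) =>
        if h : (t : ℕ) < k then q.1.2 ⟨t, h⟩
        else if (t : ℕ) = k then q.2.1.2
        else if (t : ℕ) = k+1 then q.2.1.1 else q.2.2)) ?_ ?_ ?_ ?_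
  · intro p hp
    simp only [Finset.mem_filter, Finset.mem_univ, true_and] at hp
    simp only [Finset.mem_product, Finset.mem_filter, Finset.mem_univ, true_and]
    exact ⟨hp.1, hp.2.1, hp.2.2⟩
  · intro q hq
    simp only [Finset.mem_product, Finset.mem_filter, Finset.mem_univ, true_and] at hq
    simp only [Finset.mem_filter, Finset.mem_univ, true_and]
    refine ⟨?_, ?_, ?_⟩
    · have h1 : (fun t : Fin k =>
          (if h : ((Fin.castLE (by omega : k ≤ k+3) t : Fin (k+3)) : ℕ) < k then q.1.2 ⟨(Fin.castLE (by omega) t : Fin (k+3)), h⟩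
           else if ((Fin.castLE (by omega : k ≤ k+3) t : Fin (k+3)) : ℕ) = k then q.2.1.2
           else if ((Fin.castLE (by omega : k ≤ k+3) t : Fin (k+3)) : ℕ) = k+1 then q.2.1.1 else q.2.2))
          = q.1.2 := by
        funext t
        rw [dif_pos (by exact t.2)]
        exact congrArg q.1.2 (Fin.ext rfl)
      simp only [h1]
      exact hq.1
    · simp only [show ¬((k+1:ℕ) < k) from by omega, show ¬((k:ℕ) < k) from by omega,
        show ¬((k+2:ℕ) < k) from by omega, show (k+1:ℕ) ≠ k from by omega,
        show (k+2:ℕ) ≠ k from by omega, show (k+2:ℕ) ≠ k+1 from by omega,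
        show (k:ℕ) ≠ k+1 from by omega,
        eq_self_iff_true, dite_false, dite_true, if_true, if_false, ite_false, ite_true,
        dif_neg, not_false_iff]
      exact hq.2.1
    · simp only [show ¬((k+1:ℕ) < k) from by omega, show ¬((k:ℕ) < k) from by omega,
        show ¬((k+2:ℕ) < k) from by omega, show (k+1:ℕ) ≠ k from by omega,
        show (k+2:ℕ) ≠ k from by omega, show (k+2:ℕ) ≠ k+1 from by omega,
        show (k:ℕ) ≠ k+1 from by omega,
        eq_self_iff_true, dite_false, dite_true, if_true, if_false, ite_false, ite_true,
        dif_neg, not_false_iff]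
      exact hq.2.2
  · intro p hp
    refine Prod.ext rfl ?_
    funext t
    simp only
    by_cases h1 : (t : ℕ) < k
    · rw [dif_pos h1]
      exact congrArg p.2 (Fin.ext (by simp))
    by_cases h2 : (t : ℕ) = k
    · rw [dif_neg h1, if_pos h2]
      exact congrArg p.2 (Fin.ext (by simp [h2]))
    by_cases h3 : (t : ℕ) = k+1
    · rw [dif_neg h1, if_neg h2, if_pos h3]
      exact congrArg p.2 (Fin.ext (by simp [h3]))
    · have h4 : (t : ℕ) = k+2 := by omega
      rw [dif_neg h1, if_neg h2, if_neg h3]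
      exact congrArg p.2 (Fin.ext (by simp [h4]))
  · intro q hq
    refine Prod.ext (Prod.ext rfl ?_) (Prod.ext (Prod.ext ?_ ?_) ?_)
    · funext t
      simp only
      rw [dif_pos (by exact t.2)]
      exact congrArg q.1.2 (Fin.ext rfl)
    · simp only [show ¬((k+1:ℕ) < k) from by omega, show ¬((k:ℕ) < k) from by omega,
        show ¬((k+2:ℕ) < k) from by omega, show (k+1:ℕ) ≠ k from by omega,
        show (k+2:ℕ) ≠ k from by omega, show (k+2:ℕ) ≠ k+1 from by omega,
        show (k:ℕ) ≠ k+1 from by omega,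
        eq_self_iff_true, dite_false, dite_true, if_true, if_false, ite_false, ite_true,
        dif_neg, not_false_iff]
    · simp only [show ¬((k+1:ℕ) < k) from by omega, show ¬((k:ℕ) < k) from by omega,
        show ¬((k+2:ℕ) < k) from by omega, show (k+1:ℕ) ≠ k from by omega,
        show (k+2:ℕ) ≠ k from by omega, show (k+2:ℕ) ≠ k+1 from by omega,
        show (k:ℕ) ≠ k+1 from by omega,
        eq_self_iff_true, dite_false, dite_true, if_true, if_false, ite_false, ite_true,
        dif_neg, not_false_iff]
    · simp only [show ¬((k+1:ℕ) < k) from by omega, show ¬((k:ℕ) < k) from by omega,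
        show ¬((k+2:ℕ) < k) from by omega, show (k+1:ℕ) ≠ k from by omega,
        show (k+2:ℕ) ≠ k from by omega, show (k+2:ℕ) ≠ k+1 from by omega,
        show (k:ℕ) ≠ k+1 from by omega,
        eq_self_iff_true, dite_false, dite_true, if_true, if_false, ite_false, ite_true,
        dif_neg, not_false_iff]

open scoped Classical in
lemma probSym_eq (F : Type*) [Field F] [Fintype F] [DecidableEq F] (m : ℕ)
    (S : ℕ → F → (ℕ → F) → F) :
    probSym F m S = ((Finset.univ.filter (fun p : Bool × (Fin m → F) =>
      (∑ i ∈ Finset.Icc 1 m,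
          S i (bitF F p.1) (extendVec m p.2) * ∏ j ∈ Finset.Icc (i + 1) m, extendVec m p.2 j)
        = bitF F p.1 * ∏ j ∈ Finset.Icc 1 m, extendVec m p.2 j)).card : ℝ) /
    (Fintype.card (Bool × (Fin m → F)) : ℝ) := rfl

lemma card_bf (F : Type*) [Field F] [Fintype F] (m : ℕ) :
    Fintype.card (Bool × (Fin m → F)) = 2 * Fintype.card F ^ m := by
  simp [Fintype.card_fun]


lemma filter_inst_eq {α : Type*} (s : Finset α) (p : α → Prop) (i1 i2 : DecidablePred p) :
    @Finset.filter α p i1 s = @Finset.filter α p i2 s := by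
  ext a
  simp only [Finset.mem_filter]

open scoped Classical in
lemma key {F : Type*} [Field F] [Fintype F] [DecidableEq F] {S : ℕ → F → (ℕ → F) → F}
    (hS : ValidStrategy S) (s1 s2 : F → F) {k : ℕ} (hk : 2 ≤ k) :
    1 - probSym F (k+3) (extS S s1 s2 k)
      = (1 - 1/(Fintype.card F : ℝ)) * (1 - chshProb F s1 s2) * (1 - probSym F k S) := by
  have hqpos : 0 < Fintype.card F := Fintype.card_pos
  set q := Fintype.card F with hq
  set WK : Bool × (Fin k → F) → Prop := fun p =>
    (∑ i ∈ Icc 1 k,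
        S i (bitF F p.1) (extendVec k p.2) * ∏ j ∈ Icc (i + 1) k, extendVec k p.2 j)
      = bitF F p.1 * ∏ j ∈ Icc 1 k, extendVec k p.2 j with hWK
  set WC : F × F → Prop := fun p => s1 p.1 + s2 p.2 = p.1 * p.2 with hWC
  set W3 : Bool × (Fin (k+3) → F) → Prop := fun p =>
    WK (p.1, fun t : Fin k => p.2 (Fin.castLE (by omega) t))
    ∨ WC (p.2 ⟨k+1, by omega⟩, p.2 ⟨k, by omega⟩)
    ∨ p.2 ⟨k+2, by omega⟩ = 0 with hW3
  set nK := (univ.filter WK).card with hnK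
  set aK := (univ.filter (fun p => ¬ WK p)).card with haK
  set nC := (univ.filter WC).card with hnC
  set aC := (univ.filter (fun p => ¬ WC p)).card with haC
  set aZ := (univ.filter (fun z : F => ¬ (z = 0))).card with haZ
  set n3 := (univ.filter W3).card with hn3
  set a3 := (univ.filter (fun p => ¬ W3 p)).card with ha3
  -- identify probabilities with the counts
  have hprob3 : probSym F (k+3) (extS S s1 s2 k) = (n3 : ℝ) / (2 * (q:ℝ)^(k+3)) := by
    rw [probSym_eq]
    have hfe : (Finset.univ.filter (fun p : Bool × (Fin (k+3) → F) =>
        (∑ i ∈ Finset.Icc 1 (k+3), extS S s1 s2 k i (bitF F p.1) (extendVec (k+3) p.2)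
            * ∏ j ∈ Finset.Icc (i + 1) (k+3), extendVec (k+3) p.2 j)
          = bitF F p.1 * ∏ j ∈ Finset.Icc 1 (k+3), extendVec (k+3) p.2 j))
        = Finset.univ.filter W3 := by
      refine Finset.filter_congr fun p _ => ?_
      rw [hW3]
      exact win_iff hS s1 s2 hk p.1 p.2
    rw [hfe, ← hn3, card_bf]
    push_cast
    ring
  have hprobk : probSym F k S = (nK : ℝ) / (2 * (q:ℝ)^k) := by
    rw [probSym_eq]
    have hfe : (Finset.univ.filter (fun p : Bool × (Fin k → F) =>
        (∑ i ∈ Finset.Icc 1 k, S i (bitF F p.1) (extendVec k p.2)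
            * ∏ j ∈ Finset.Icc (i + 1) k, extendVec k p.2 j)
          = bitF F p.1 * ∏ j ∈ Finset.Icc 1 k, extendVec k p.2 j))
        = Finset.univ.filter WK := by
      refine Finset.filter_congr fun p _ => ?_
      rw [hWK]
    rw [hfe, ← hnK, card_bf]
    push_cast
    ring
  have hprobC : chshProb F s1 s2 = (nC : ℝ) / ((q:ℝ)^2) := by
    unfold chshProb
    have hfe : (Finset.univ.filter (fun p : F × F => s1 p.1 + s2 p.2 = p.1 * p.2))
        = Finset.univ.filter WC := by
      refine Finset.filter_congr fun p _ => ?_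
      rw [hWC]
    rw [hfe, ← hnC, hq]
  -- counting identities
  have hKsum : nK + aK = 2 * q^k := by
    rw [hnK, haK, Finset.card_filter_add_card_filter_not, Finset.card_univ, card_bf]
  have hCsum : nC + aC = q^2 := by
    rw [hnC, haC, Finset.card_filter_add_card_filter_not, Finset.card_univ,
      Fintype.card_prod, hq, sq]
  have h3sum : n3 + a3 = 2 * q^(k+3) := by
    rw [hn3, ha3, Finset.card_filter_add_card_filter_not, Finset.card_univ, card_bf]
  have hZsum : 1 + aZ = q := by
    have h0 : (univ.filter (fun z : F => z = 0)).card = 1 := by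
      rw [Finset.filter_eq', if_pos (Finset.mem_univ (0:F))]
      exact Finset.card_singleton 0
    have h1 := Finset.card_filter_add_card_filter_not
      (s := (univ : Finset F)) (p := fun z : F => z = 0)
    rw [h0, Finset.card_univ] at h1
    rw [haZ, hq]
    exact h1
  have hbij : a3 = aK * (aC * aZ) := by
    rw [ha3, haK, haC, haZ]
    have hfe : (univ.filter (fun p => ¬ W3 p))
        = (univ.filter (fun p : Bool × (Fin (k+3) → F) =>
          (fun r => ¬ WK r) (p.1, fun t : Fin k => p.2 (Fin.castLE (by omega) t))
          ∧ (fun r => ¬ WC r) (p.2 ⟨k+1, by omega⟩, p.2 ⟨k, by omega⟩)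
          ∧ (fun z : F => ¬ (z = 0)) (p.2 ⟨k+2, by omega⟩))) := by
      refine Finset.filter_congr fun p _ => ?_
      simp only [hW3, not_or]
    rw [hfe]
    convert card_filter_triple k (fun r => ¬ WK r) (fun r => ¬ WC r) (fun z : F => ¬ (z = 0)) using 2
    all_goals first
      | (ext a; simp only [Finset.mem_filter])
      | (apply congrArg Finset.card; ext a; simp only [Finset.mem_filter])
      | (congr 1 <;> (apply congrArg Finset.card; ext a; simp only [Finset.mem_filter]))
  -- final real arithmetic
  have hqR : ((q:ℝ)) ≠ 0 := by positivity
  have hA : (aK : ℝ) = 2 * (q:ℝ)^k - nK := by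
    have := congrArg (fun n : ℕ => (n : ℝ)) hKsum
    push_cast at this
    linarith
  have hB : (aC : ℝ) = (q:ℝ)^2 - nC := by
    have := congrArg (fun n : ℕ => (n : ℝ)) hCsum
    push_cast at this
    linarith
  have hZ : (aZ : ℝ) = (q:ℝ) - 1 := by
    have := congrArg (fun n : ℕ => (n : ℝ)) hZsum
    push_cast at this
    linarith
  have hN3 : (n3 : ℝ) = 2 * (q:ℝ)^(k+3) - a3 := by
    have := congrArg (fun n : ℕ => (n : ℝ)) h3sum
    push_cast at this
    linarith
  have ha3R : (a3 : ℝ) = (2 * (q:ℝ)^k - nK) * (((q:ℝ)^2 - nC) * ((q:ℝ) - 1)) := by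
    have := congrArg (fun n : ℕ => (n : ℝ)) hbij
    push_cast at this
    rw [this, hA, hB, hZ]
  rw [hprob3, hprobk, hprobC, hN3, ha3R]
  field_simp
  ring

section Bounds
variable (F : Type*) [Field F] [Fintype F] [DecidableEq F]

lemma probSym_nonneg (m : ℕ) (S : ℕ → F → (ℕ → F) → F) : 0 ≤ probSym F m S := by
  rw [probSym_eq]
  positivity

lemma probSym_le_one (m : ℕ) (S : ℕ → F → (ℕ → F) → F) : probSym F m S ≤ 1 := by
  rw [probSym_eq]
  have h1 : 0 < (Fintype.card (Bool × (Fin m → F)) : ℝ) := by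
    exact_mod_cast Fintype.card_pos
  rw [div_le_one h1]
  have h2 := Finset.card_filter_le (univ : Finset (Bool × (Fin m → F)))
    (fun p : Bool × (Fin m → F) =>
      (∑ i ∈ Finset.Icc 1 m,
          S i (bitF F p.1) (extendVec m p.2) * ∏ j ∈ Finset.Icc (i + 1) m, extendVec m p.2 j)
        = bitF F p.1 * ∏ j ∈ Finset.Icc 1 m, extendVec m p.2 j)
  rw [Finset.card_univ] at h2
  exact_mod_cast h2

lemma chshProb_nonneg (s1 s2 : F → F) : 0 ≤ chshProb F s1 s2 := by
  unfold chshProb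
  positivity

lemma chshProb_le_one (s1 s2 : F → F) : chshProb F s1 s2 ≤ 1 := by
  unfold chshProb
  have h1 : 0 < ((Fintype.card F : ℝ))^2 := by
    have : (0:ℝ) < (Fintype.card F : ℝ) := by exact_mod_cast Fintype.card_pos
    positivity
  rw [div_le_one h1]
  have h2 := Finset.card_filter_le (univ : Finset (F × F))
    (fun p : F × F => s1 p.1 + s2 p.2 = p.1 * p.2)
  rw [Finset.card_univ] at h2
  have h3 : (Fintype.card (F × F) : ℝ) = (Fintype.card F : ℝ)^2 := by
    rw [Fintype.card_prod]
    push_cast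
    ring
  calc ((Finset.univ.filter (fun p : F × F => s1 p.1 + s2 p.2 = p.1 * p.2)).card : ℝ)
      ≤ (Fintype.card (F × F) : ℝ) := by exact_mod_cast h2
    _ = _ := h3

lemma zeroStrat_valid : ValidStrategy (fun (_ : ℕ) (_ : F) (_ : ℕ → F) => (0:F)) :=
  ⟨fun _ _ _ => rfl, fun _ _ _ _ _ _ => rfl⟩

lemma gSym_set_nonempty (m : ℕ) :
    {p : ℝ | ∃ S, ValidStrategy S ∧ p = probSym F m S}.Nonempty :=
  ⟨probSym F m (fun _ _ _ => 0), ⟨_, zeroStrat_valid F, rfl⟩⟩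

lemma gSym_set_bdd (m : ℕ) :
    BddAbove {p : ℝ | ∃ S, ValidStrategy S ∧ p = probSym F m S} := by
  refine ⟨1, fun p hp => ?_⟩
  obtain ⟨S, _, rfl⟩ := hp
  exact probSym_le_one F m S

lemma omega_set_nonempty :
    {p : ℝ | ∃ s1 s2 : F → F, p = chshProb F s1 s2}.Nonempty :=
  ⟨chshProb F (fun _ => 0) (fun _ => 0), ⟨_, _, rfl⟩⟩

lemma omega_set_bdd :
    BddAbove {p : ℝ | ∃ s1 s2 : F → F, p = chshProb F s1 s2} := by
  refine ⟨1, fun p hp => ?_⟩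
  obtain ⟨s1, s2, rfl⟩ := hp
  exact chshProb_le_one F s1 s2

lemma gSym_nonneg (m : ℕ) : 0 ≤ gSym F m :=
  le_trans (probSym_nonneg F m (fun _ _ _ => 0))
    (le_csSup (gSym_set_bdd F m) ⟨_, zeroStrat_valid F, rfl⟩)

lemma gSym_le_one (m : ℕ) : gSym F m ≤ 1 :=
  csSup_le (gSym_set_nonempty F m) (fun p hp => by
    obtain ⟨S, _, rfl⟩ := hp; exact probSym_le_one F m S)

lemma omega_nonneg : 0 ≤ omegaCHSH F :=
  le_trans (chshProb_nonneg F (fun _ => 0) (fun _ => 0))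
    (le_csSup (omega_set_bdd F) ⟨_, _, rfl⟩)

lemma omega_le_one : omegaCHSH F ≤ 1 :=
  csSup_le (omega_set_nonempty F) (fun p hp => by
    obtain ⟨s1, s2, rfl⟩ := hp; exact chshProb_le_one F s1 s2)

end Bounds


/-- the recursion 1 − g'_{k+3} ≤ (1 − 1/Q)(1 − ω(CHSH_Q))·(1 − g'_k)
for all k ≥ 2. -/
theorem gSym_recursion (F : Type*) [Field F] [Fintype F] [DecidableEq F]
    (k : ℕ) (hk : 2 ≤ k) :
    1 - gSym F (k + 3) ≤
      (1 - 1 / (Fintype.card F : ℝ)) * (1 - omegaCHSH F) * (1 - gSym F k) := by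
  have hq1 : (1:ℝ) ≤ (Fintype.card F : ℝ) := by
    exact_mod_cast Fintype.card_pos
  have hQ0 : 0 ≤ 1 - 1 / (Fintype.card F : ℝ) := by
    have : 1 / (Fintype.card F : ℝ) ≤ 1 := by
      rw [div_le_one (by linarith)]
      exact hq1
    linarith
  have hQ1 : 1 - 1 / (Fintype.card F : ℝ) ≤ 1 := by
    have : 0 < (Fintype.card F : ℝ) := by linarith
    have : 0 < 1 / (Fintype.card F : ℝ) := by positivity
    linarith
  apply le_of_forall_pos_le_add
  intro ε hε
  set ε' := min (ε / 3) 1 with hε'def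
  have hε'pos : 0 < ε' := lt_min (by linarith) one_pos
  have hε'le : 3 * ε' ≤ ε := by
    rcases min_le_iff.1 (le_refl ε') with h | h
    all_goals
      simp only [hε'def]
      rcases le_total (ε/3) 1 with h2 | h2
      · rw [min_eq_left h2]; linarith
      · rw [min_eq_right h2]; linarith
  have hε'1 : ε' ≤ 1 := min_le_right _ _
  -- near-optimal k-round strategy
  obtain ⟨pK, hpKmem, hpKlt⟩ := exists_lt_of_lt_csSup (gSym_set_nonempty F k)
    (show gSym F k - ε' < gSym F k by linarith)
  obtain ⟨SK, hSK, rfl⟩ := hpKmem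
  -- near-optimal CHSH strategy
  obtain ⟨pC, hpCmem, hpClt⟩ := exists_lt_of_lt_csSup (omega_set_nonempty F)
    (show omegaCHSH F - ε' < omegaCHSH F by linarith)
  obtain ⟨s1, s2, rfl⟩ := hpCmem
  -- the extended strategy
  have hmem : probSym F (k+3) (extS SK s1 s2 k)
      ∈ {p : ℝ | ∃ S, ValidStrategy S ∧ p = probSym F (k+3) S} :=
    ⟨extS SK s1 s2 k, extS_valid hSK s1 s2 hk, rfl⟩
  have hstep1 : 1 - gSym F (k+3) ≤ 1 - probSym F (k+3) (extS SK s1 s2 k) := by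
    have := le_csSup (gSym_set_bdd F (k+3)) hmem
    simpa [gSym] using by linarith [le_csSup (gSym_set_bdd F (k+3)) hmem]
  have hstep2 := key hSK s1 s2 hk
  -- bounds
  have hg1 : gSym F k ≤ 1 := gSym_le_one F k
  have hg0 : 0 ≤ gSym F k := gSym_nonneg F k
  have hω1 : omegaCHSH F ≤ 1 := omega_le_one F
  have hω0 : 0 ≤ omegaCHSH F := omega_nonneg F
  have hc0 : 0 ≤ chshProb F s1 s2 := chshProb_nonneg F s1 s2
  have hc1 : chshProb F s1 s2 ≤ 1 := chshProb_le_one F s1 s2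
  have hp0 : 0 ≤ probSym F k SK := probSym_nonneg F k SK
  have hp1 : probSym F k SK ≤ 1 := probSym_le_one F k SK
  have hpg : probSym F k SK ≤ gSym F k := le_csSup (gSym_set_bdd F k) ⟨SK, hSK, rfl⟩
  have hcw : chshProb F s1 s2 ≤ omegaCHSH F :=
    le_csSup (omega_set_bdd F) ⟨s1, s2, rfl⟩
  have hprod : (1 - chshProb F s1 s2) * (1 - probSym F k SK)
      ≤ (1 - omegaCHSH F) * (1 - gSym F k) + 3 * ε' := by
    nlinarith [hpKlt, hpClt, hε'pos, hε'1]
  calc 1 - gSym F (k+3)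
      ≤ 1 - probSym F (k+3) (extS SK s1 s2 k) := hstep1
    _ = (1 - 1/(Fintype.card F : ℝ)) * (1 - chshProb F s1 s2) * (1 - probSym F k SK) := hstep2
    _ ≤ (1 - omegaCHSH F) * (1 - gSym F k) * (1 - 1/(Fintype.card F : ℝ)) + ε := by
      nlinarith [hprod, hQ0, hQ1, hε'le, hε'pos,
        mul_le_mul_of_nonneg_left hprod hQ0,
        mul_nonneg (mul_nonneg (by linarith : (0:ℝ) ≤ 1 - omegaCHSH F)
          (by linarith : (0:ℝ) ≤ 1 - gSym F k)) hQ0]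
    _ = (1 - 1/(Fintype.card F : ℝ)) * (1 - omegaCHSH F) * (1 - gSym F k) + ε := by ring
end

section
/- For every m ≥ 3, the maximal cheating probability g_m of Alice in the m-round F_Q relativistic bit commitment protocol satisfies g_m ≥ 1 − (1/2)·((1 − 1/Q)(1 − ω(CHSH_Q)))^{⌊(m−1)/3⌋}. -/
open Finset

section Attack

open scoped Classical

variable {F : Type*} [Field F]

/-- One CHSH block step on the running check value. -/
noncomputable def blockStep (s1 s2 : F → F) (A a b c : F) : F :=
  if A = 0 then 0 else c * (s1 b + s2 (a * A) - b * (a * A))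

/-- State after the initial `t` "gap" rounds (playing 0). -/
def gapSt (x : ℕ → F) (D : F) : ℕ → F
  | 0 => D
  | t + 1 => - x (t + 1) * gapSt x D t

/-- State after `g` gap rounds and `j` blocks. -/
noncomputable def blkSt (s1 s2 : F → F) (g : ℕ) (x : ℕ → F) (D : F) : ℕ → F
  | 0 => gapSt x D g
  | j + 1 => blockStep s1 s2 (blkSt s1 s2 g x D j)
      (x (g + 3*j + 1)) (x (g + 3*j + 2)) (x (g + 3*j + 3))

lemma gapSt_succ (x : ℕ → F) (D : F) (t : ℕ) :
    gapSt x D (t+1) = - x (t+1) * gapSt x D t := rfl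

lemma blkSt_succ (s1 s2 : F → F) (g : ℕ) (x : ℕ → F) (D : F) (j : ℕ) :
    blkSt s1 s2 g x D (j+1) = blockStep s1 s2 (blkSt s1 s2 g x D j)
      (x (g + 3*j + 1)) (x (g + 3*j + 2)) (x (g + 3*j + 3)) := rfl

/-- The cheating strategy. -/
noncomputable def Strat (s1 s2 : F → F) (m : ℕ) : ℕ → F → (ℕ → F) → F := fun i d x =>
  if i = m then
    (if blkSt s1 s2 ((m-3) % 3) x d ((m-3)/3) = 0 then 0
     else s2 (x (m-2) * blkSt s1 s2 ((m-3) % 3) x d ((m-3)/3)))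
  else if i = m - 1 then
    (if blkSt s1 s2 ((m-3) % 3) x d ((m-3)/3) = 0 then 0 else - s1 (x (m-1)))
  else if (m-3) % 3 < i ∧ i ≤ m - 3 ∧ (i - (m-3) % 3) % 3 = 2 then
    (if blkSt s1 s2 ((m-3) % 3) x d ((i - (m-3) % 3 - 2)/3) = 0 then 0 else - s1 (x i))
  else if (m-3) % 3 < i ∧ i ≤ m - 3 ∧ (i - (m-3) % 3) % 3 = 0 then
    (if blkSt s1 s2 ((m-3) % 3) x d ((i - (m-3) % 3)/3 - 1) = 0 then 0
     else x i * s2 (x (i - 2) * blkSt s1 s2 ((m-3) % 3) x d ((i - (m-3) % 3)/3 - 1)))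
  else 0

lemma gapSt_congr {x x' : ℕ → F} {D : F} (t : ℕ)
    (h : ∀ j, 1 ≤ j → j ≤ t → x j = x' j) : gapSt x D t = gapSt x' D t := by
  induction t with
  | zero => rfl
  | succ t ih =>
    rw [gapSt_succ, gapSt_succ, h (t+1) (by omega) le_rfl,
      ih (fun j h1 h2 => h j h1 (by omega))]

lemma blkSt_congr {s1 s2 : F → F} {g : ℕ} {x x' : ℕ → F} {D : F} (j : ℕ)
    (h : ∀ i, 1 ≤ i → i ≤ g + 3*j → x i = x' i) :
    blkSt s1 s2 g x D j = blkSt s1 s2 g x' D j := by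
  induction j with
  | zero => exact gapSt_congr g (fun i h1 h2 => h i h1 (by omega))
  | succ j ih =>
    rw [blkSt_succ, blkSt_succ, h (g+3*j+1) (by omega) (by omega),
      h (g+3*j+2) (by omega) (by omega),
      h (g+3*j+3) (by omega) (by omega), ih (fun i h1 h2 => h i h1 (by omega))]

lemma gapSt_shift {x x' : ℕ → F} (hx : ∀ i, 1 ≤ i → x (i+1) = x' i) (D : F) :
    ∀ t, gapSt x D (t+1) = gapSt x' (-(x 1) * D) t := by
  intro t
  induction t with
  | zero => simp [gapSt]
  | succ t ih =>
    rw [show t+1+1 = (t+1)+1 from rfl, gapSt_succ x D (t+1), ih,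
      hx (t+1) (by omega), ← gapSt_succ]

lemma blkSt_shift1 {s1 s2 : F → F} {x x' : ℕ → F}
    (hx : ∀ i, 1 ≤ i → x (i+1) = x' i) (g : ℕ) (D : F) :
    ∀ j, blkSt s1 s2 (g+1) x D j = blkSt s1 s2 g x' (-(x 1) * D) j := by
  intro j
  induction j with
  | zero => exact gapSt_shift hx D g
  | succ j ih =>
    rw [blkSt_succ, blkSt_succ, ih, show g+1+3*j+1 = (g+3*j+1)+1 by omega,
      hx (g+3*j+1) (by omega),
      show g+1+3*j+2 = (g+3*j+2)+1 by omega, hx (g+3*j+2) (by omega),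
      show g+1+3*j+3 = (g+3*j+3)+1 by omega, hx (g+3*j+3) (by omega)]

lemma blkSt_shift3 {s1 s2 : F → F} {x x' : ℕ → F}
    (hx : ∀ i, 1 ≤ i → x (i+3) = x' i) (D : F) :
    ∀ j, blkSt s1 s2 0 x D (j+1)
      = blkSt s1 s2 0 x' (blockStep s1 s2 D (x 1) (x 2) (x 3)) j := by
  intro j
  induction j with
  | zero => simp [blkSt, gapSt]
  | succ j ih =>
    rw [show j+1+1 = (j+1)+1 from rfl, blkSt_succ s1 s2 0 x D (j+1), ih,
      show 0+3*(j+1)+1 = (0+3*j+1)+3 by omega, hx (0+3*j+1) (by omega),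
      show 0+3*(j+1)+2 = (0+3*j+2)+3 by omega, hx (0+3*j+2) (by omega),
      show 0+3*(j+1)+3 = (0+3*j+3)+3 by omega, hx (0+3*j+3) (by omega), ← blkSt_succ]

end Attack

section Win
open scoped Classical
variable {F : Type*} [Field F]

lemma win_iff_s10 (s1 s2 : F → F) {m g r : ℕ} (hm : 3 ≤ m)
    (hg : (m-3) % 3 = g) (hr : (m-3) / 3 = r) (D : F) (x : ℕ → F) :
    (Strat s1 s2 m m D x
        = alphaRec D x (fun i => Strat s1 s2 m i D x) (m-1)) ↔
    (blkSt s1 s2 g x D r = 0 ∨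
      s1 (x (m-1)) + s2 (x (m-2) * blkSt s1 s2 g x D r)
        = x (m-1) * (x (m-2) * blkSt s1 s2 g x D r)) := by
  have hSe : ∀ i, i ≠ m → i ≠ m-1 →
      ¬((m-3)%3 < i ∧ i ≤ m-3 ∧ (i-(m-3)%3)%3 = 2) →
      ¬((m-3)%3 < i ∧ i ≤ m-3 ∧ (i-(m-3)%3)%3 = 0) →
      Strat s1 s2 m i D x = 0 := by
    intro i h1 h2 h3 h4
    simp only [Strat, if_neg h1, if_neg h2, if_neg h3, if_neg h4]
  have hS2 : ∀ i, (m-3)%3 < i → i ≤ m-3 → (i-(m-3)%3)%3 = 2 →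
      Strat s1 s2 m i D x
        = (if blkSt s1 s2 g x D ((i - g - 2)/3) = 0 then 0 else - s1 (x i)) := by
    intro i h1 h2 h3
    have hne1 : i ≠ m := by omega
    have hne2 : i ≠ m-1 := by omega
    have hp : g < i ∧ i ≤ m-3 ∧ (i - g) % 3 = 2 := by omega
    simp only [Strat, hg, hr, if_neg hne1, if_neg hne2, if_pos hp]
  have hS0 : ∀ i, (m-3)%3 < i → i ≤ m-3 → (i-(m-3)%3)%3 = 0 →
      Strat s1 s2 m i D x
        = (if blkSt s1 s2 g x D ((i - g)/3 - 1) = 0 then 0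
           else x i * s2 (x (i - 2) * blkSt s1 s2 g x D ((i - g)/3 - 1))) := by
    intro i h1 h2 h3
    have hne1 : i ≠ m := by omega
    have hne2 : i ≠ m-1 := by omega
    have hne3 : ¬(g < i ∧ i ≤ m-3 ∧ (i - g) % 3 = 2) := by omega
    have hp : g < i ∧ i ≤ m-3 ∧ (i - g) % 3 = 0 := by omega
    simp only [Strat, hg, hr, if_neg hne1, if_neg hne2, if_neg hne3, if_pos hp]
  have hSm : Strat s1 s2 m m D x
      = (if blkSt s1 s2 g x D r = 0 then 0
         else s2 (x (m-2) * blkSt s1 s2 g x D r)) := by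
    simp only [Strat, hg, hr, eq_self_iff_true, if_true]
  have hSm1 : Strat s1 s2 m (m-1) D x
      = (if blkSt s1 s2 g x D r = 0 then 0 else - s1 (x (m-1))) := by
    have h1 : m-1 ≠ m := by omega
    simp only [Strat, hg, hr, if_neg h1, eq_self_iff_true, if_true]
  -- gap rounds
  have E0 : ∀ t, t ≤ g → alphaRec D x (fun i => Strat s1 s2 m i D x) t = gapSt x D t := by
    intro t
    induction t with
    | zero => intro _; rfl
    | succ t ih =>
      intro ht
      have h0 : Strat s1 s2 m (t+1) D x = 0 := by
        apply hSe <;> omega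
      simp only [alphaRec, h0, ih (by omega), gapSt_succ]
      ring
  -- block rounds
  have E1 : ∀ j, j ≤ r → alphaRec D x (fun i => Strat s1 s2 m i D x) (g + 3*j)
      = blkSt s1 s2 g x D j := by
    intro j
    induction j with
    | zero =>
      intro _
      simpa [blkSt] using E0 g le_rfl
    | succ j ih =>
      intro hj
      have h1 : Strat s1 s2 m ((g+3*j)+1) D x = 0 := by
        apply hSe <;> omega
      have h2 : Strat s1 s2 m ((g+3*j)+1+1) D x
          = (if blkSt s1 s2 g x D j = 0 then 0 else - s1 (x ((g+3*j)+1+1))) := by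
        rw [hS2 ((g+3*j)+1+1) (by omega) (by omega) (by omega),
          show ((g+3*j)+1+1 - g - 2)/3 = j by omega]
      have h3 : Strat s1 s2 m (((g+3*j)+1+1)+1) D x
          = (if blkSt s1 s2 g x D j = 0 then 0
             else x (((g+3*j)+1+1)+1) *
               s2 (x ((((g+3*j)+1+1)+1) - 2) * blkSt s1 s2 g x D j)) := by
        rw [hS0 (((g+3*j)+1+1)+1) (by omega) (by omega) (by omega),
          show ((((g+3*j)+1+1)+1 - g)/3 - 1) = j by omega]
      rw [show g+3*(j+1) = ((g+3*j)+1+1)+1 by omega]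
      simp only [alphaRec, h1, h2, h3, ih (by omega),
        show (((g+3*j)+1+1)+1) - 2 = (g+3*j)+1 by omega,
        blkSt_succ, show g+3*j+1 = (g+3*j)+1 by omega,
        show g+3*j+2 = (g+3*j)+1+1 by omega, show g+3*j+3 = ((g+3*j)+1+1)+1 by omega]
      by_cases hB : blkSt s1 s2 g x D j = 0
      · simp [hB, blockStep]
      · simp only [if_neg hB, blockStep, if_neg hB]
        ring
  have hT := E1 r le_rfl
  rw [show g + 3*r = m-3 by omega] at hT
  have i1 : alphaRec D x (fun i => Strat s1 s2 m i D x) (m-2)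
      = - x (m-2) * blkSt s1 s2 g x D r := by
    rw [show m-2 = (m-3)+1 by omega]
    have h1 : Strat s1 s2 m ((m-3)+1) D x = 0 := by
      apply hSe <;> omega
    simp only [alphaRec, h1, hT]
    ring
  have i2 : alphaRec D x (fun i => Strat s1 s2 m i D x) (m-1)
      = (if blkSt s1 s2 g x D r = 0 then 0 else - s1 (x (m-1)))
        + x (m-1) * (x (m-2) * blkSt s1 s2 g x D r) := by
    rw [show m-1 = (m-2)+1 by omega]
    simp only [alphaRec]
    rw [show (m-2)+1 = m-1 by omega, hSm1, i1]
    ring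
  rw [hSm, i2]
  by_cases hB : blkSt s1 s2 g x D r = 0
  · simp [hB]
  · simp only [if_neg hB, hB, false_or, if_false]
    constructor
    · intro h; linear_combination h
    · intro h; linear_combination h

end Win

section Valid
open scoped Classical
variable {F : Type*} [Field F]

lemma strat_valid (s1 s2 : F → F) {m : ℕ} (hm : 3 ≤ m) :
    ValidStrategy (Strat s1 s2 m) := by
  have h1' : ∀ (d : F) (x : ℕ → F), Strat s1 s2 m 1 d x = 0 := by
    intro d x
    simp only [Strat]
    rw [if_neg (by omega), if_neg (by omega), if_neg (by omega), if_neg (by omega)]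
  constructor
  · intro d d' x; rw [h1', h1']
  · intro i d x x' h hxi
    simp only [Strat]
    by_cases h1 : i = m
    · simp only [if_pos h1]
      rw [blkSt_congr ((m-3)/3) (fun j hj1 hj2 => h j (by omega)), h (m-2) (by omega)]
    · by_cases h2 : i = m - 1
      · simp only [if_neg h1, if_pos h2]
        rw [blkSt_congr ((m-3)/3) (fun j hj1 hj2 => h j (by omega)),
          show x (m-1) = x' (m-1) by rw [← h2]; exact hxi]
      · by_cases h3 : (m-3) % 3 < i ∧ i ≤ m - 3 ∧ (i - (m-3) % 3) % 3 = 2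
        · simp only [if_neg h1, if_neg h2, if_pos h3]
          rw [blkSt_congr ((i - (m-3) % 3 - 2)/3) (fun j hj1 hj2 => h j (by omega)), hxi]
        · by_cases h4 : (m-3) % 3 < i ∧ i ≤ m - 3 ∧ (i - (m-3) % 3) % 3 = 0
          · simp only [if_neg h1, if_neg h2, if_neg h3, if_pos h4]
            rw [blkSt_congr ((i - (m-3) % 3)/3 - 1) (fun j hj1 hj2 => h j (by omega)),
              hxi, h (i-2) (by omega)]
          · simp only [if_neg h1, if_neg h2, if_neg h3, if_neg h4]

end Valid

section Count
set_option linter.unusedSectionVars false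
open scoped Classical
variable {F : Type*} [Field F] [Fintype F] [DecidableEq F]

lemma card_filter_cons {n : ℕ} (P : (Fin (n+1) → F) → Prop) :
    (univ.filter P).card
      = ∑ a : F, (univ.filter fun w : Fin n → F => P (Fin.cons a w)).card := by
  rw [Finset.card_filter]
  rw [← Equiv.sum_comp (Fin.consEquiv fun _ : Fin (n+1) => F)
    (fun v => if P v then 1 else 0)]
  rw [Fintype.sum_prod_type]
  simp only [Fin.consEquiv, Equiv.coe_fn_mk, Finset.card_filter]
  rfl

lemma extendVec_cons_one {n : ℕ} (a : F) (w : Fin n → F) :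
    extendVec (n+1) (Fin.cons a w) 1 = a := by
  simp only [extendVec]
  rw [dif_pos ⟨le_rfl, by omega⟩]
  have : (⟨1-1, by omega⟩ : Fin (n+1)) = 0 := by ext; simp
  rw [this, Fin.cons_zero]

lemma extendVec_cons_succ {n : ℕ} (a : F) (w : Fin n → F) :
    ∀ i, 1 ≤ i → extendVec (n+1) (Fin.cons a w) (i+1) = extendVec n w i := by
  intro i hi
  simp only [extendVec]
  by_cases hc : i ≤ n
  · rw [dif_pos ⟨by omega, by omega⟩, dif_pos ⟨hi, hc⟩]
    have : (⟨i+1-1, by omega⟩ : Fin (n+1)) = Fin.succ ⟨i-1, by omega⟩ := by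
      ext; simp; omega
    rw [this, Fin.cons_succ]
  · rw [dif_neg (by omega), dif_neg (by omega)]

end Count

section Count2
set_option linter.unusedSectionVars false
open scoped Classical
variable {F : Type*} [Field F] [Fintype F] [DecidableEq F]

def chshCount (s1 s2 : F → F) : ℕ :=
  (univ.filter fun p : F × F => s1 p.1 + s2 p.2 = p.1 * p.2).card

lemma chshCount_le (s1 s2 : F → F) : chshCount s1 s2 ≤ Fintype.card F ^ 2 := by
  calc chshCount s1 s2 ≤ Fintype.card (F × F) := by
        exact le_trans (Finset.card_filter_le _ _) (by rw [Finset.card_univ])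
    _ = Fintype.card F ^ 2 := by rw [Fintype.card_prod]; ring

lemma sum_ite_ne_zero (V : ℕ) :
    ∑ a : F, (if a = 0 then 0 else V) = (Fintype.card F - 1) * V := by
  rw [Finset.sum_ite, Finset.sum_const_zero, Finset.sum_const, zero_add, smul_eq_mul]
  congr 1
  have h : (univ.filter fun a : F => ¬ a = 0) = univ.erase 0 := by
    ext a; simp
  rw [h, Finset.card_erase_of_mem (Finset.mem_univ 0), Finset.card_univ]

lemma sum_pair (s1 s2 : F → F) {A : F} (hA : A ≠ 0) (W : ℕ) :
    ∑ a : F, ∑ b : F, (if s1 b + s2 (a * A) = b * (a * A) then 0 else W)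
      = (Fintype.card F ^ 2 - chshCount s1 s2) * W := by
  rw [← Finset.sum_product' (s := univ) (t := univ)
    (f := fun a b : F => if s1 b + s2 (a * A) = b * (a * A) then (0:ℕ) else W),
    Finset.univ_product_univ]
  rw [Finset.sum_ite, Finset.sum_const_zero, Finset.sum_const, zero_add, smul_eq_mul]
  congr 1
  have hcard : (univ.filter fun p : F × F => s1 p.2 + s2 (p.1 * A) = p.2 * (p.1 * A)).card
      = chshCount s1 s2 := by
    apply Finset.card_equiv ((Equiv.prodComm F F).trans
      (Equiv.prodCongr (Equiv.refl F) (Equiv.mulRight₀ A hA)))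
    intro p
    simp [chshCount, Equiv.prodCongr, Equiv.mulRight₀]
  have hsplit := Finset.card_filter_add_card_filter_not
    (s := (univ : Finset (F × F))) (p := fun p : F × F => s1 p.2 + s2 (p.1 * A) = p.2 * (p.1 * A))
  have hQ : (univ : Finset (F × F)).card = Fintype.card F ^ 2 := by
    rw [Finset.card_univ, Fintype.card_prod]; ring
  rw [hcard, hQ] at hsplit
  have h2 := chshCount_le s1 s2
  omega

lemma sum_gap (A : F) (V : ℕ) :
    ∑ a : F, (if -a * A = 0 then 0 else V)
      = if A = 0 then 0 else (Fintype.card F - 1) * V := by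
  by_cases hA : A = 0
  · simp [hA]
  · rw [if_neg hA]
    have h : ∀ a : F, (if -a * A = 0 then (0:ℕ) else V) = if a = 0 then 0 else V := by
      intro a
      by_cases ha : a = 0
      · simp [ha]
      · simp [ha, hA]
    rw [Finset.sum_congr rfl (fun a _ => h a), sum_ite_ne_zero]

lemma sum_blockStep (s1 s2 : F → F) (A : F) (V : ℕ) :
    ∑ a : F, ∑ b : F, ∑ c : F, (if blockStep s1 s2 A a b c = 0 then 0 else V)
      = if A = 0 then 0
        else ((Fintype.card F ^ 2 - chshCount s1 s2) * ((Fintype.card F - 1) * V)) := by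
  by_cases hA : A = 0
  · simp [blockStep, hA]
  · rw [if_neg hA]
    have h1 : ∀ a b : F, (∑ c : F, if blockStep s1 s2 A a b c = 0 then (0:ℕ) else V)
        = if s1 b + s2 (a*A) = b*(a*A) then 0 else (Fintype.card F - 1) * V := by
      intro a b
      by_cases hE : s1 b + s2 (a*A) - b*(a*A) = 0
      · have h0 : ∀ c : F, blockStep s1 s2 A a b c = 0 := by
          intro c; simp [blockStep, hA, hE]
        have hcond : s1 b + s2 (a*A) = b*(a*A) := by linear_combination hE
        simp [h0, hcond]
      · have hcond : ¬ (s1 b + s2 (a*A) = b*(a*A)) := fun h => hE (by rw [h]; ring)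
        rw [if_neg hcond]
        have h2 : ∀ c : F, (if blockStep s1 s2 A a b c = 0 then (0:ℕ) else V)
            = if c = 0 then 0 else V := by
          intro c
          by_cases hc : c = 0
          · simp [blockStep, hc, hA]
          · simp [blockStep, hc, hA, hE, mul_eq_zero]
        rw [Finset.sum_congr rfl (fun c _ => h2 c), sum_ite_ne_zero]
    rw [Finset.sum_congr rfl (fun a _ => Finset.sum_congr rfl (fun b _ => h1 a b)),
      sum_pair s1 s2 hA]

lemma gapSt_zero (x : ℕ → F) (t : ℕ) : gapSt x 0 t = 0 := by
  induction t with
  | zero => rfl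
  | succ t ih => rw [gapSt_succ, ih, mul_zero]

lemma blkSt_zero (s1 s2 : F → F) (g : ℕ) (x : ℕ → F) (j : ℕ) :
    blkSt s1 s2 g x 0 j = 0 := by
  induction j with
  | zero => exact gapSt_zero x g
  | succ j ih => rw [blkSt_succ, ih, blockStep, if_pos rfl]

/-- The losing event for the strategy, in closed form. -/
def lossPred (s1 s2 : F → F) (g r n : ℕ) (A : F) (v : Fin n → F) : Prop :=
  blkSt s1 s2 g (extendVec n v) A r ≠ 0 ∧
  ¬ (s1 (extendVec n v n)
      + s2 (extendVec n v (n-1) * blkSt s1 s2 g (extendVec n v) A r)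
    = extendVec n v n * (extendVec n v (n-1) * blkSt s1 s2 g (extendVec n v) A r))

lemma lossPred_zero (s1 s2 : F → F) (g r n : ℕ) (v : Fin n → F) :
    ¬ lossPred s1 s2 g r n 0 v := by
  intro h
  exact h.1 (blkSt_zero s1 s2 g _ r)

lemma card_filter_cons2 {n : ℕ} (P : (Fin (n+1+1) → F) → Prop) :
    (univ.filter P).card = ∑ a : F, ∑ b : F,
      (univ.filter fun w : Fin n → F => P (Fin.cons a (Fin.cons b w))).card := by
  rw [card_filter_cons]
  exact Finset.sum_congr rfl (fun a _ => by rw [card_filter_cons])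

lemma card_filter_cons3 {n : ℕ} (P : (Fin (n+1+1+1) → F) → Prop) :
    (univ.filter P).card = ∑ a : F, ∑ b : F, ∑ c : F,
      (univ.filter fun w : Fin n → F => P (Fin.cons a (Fin.cons b (Fin.cons c w)))).card := by
  rw [card_filter_cons]
  exact Finset.sum_congr rfl (fun a _ => by rw [card_filter_cons2])

lemma lossPred_cons_gap (s1 s2 : F → F) (g r n : ℕ) (hn : 2 ≤ n) (A a : F) (w : Fin n → F) :
    lossPred s1 s2 (g+1) r (n+1) A (Fin.cons a w) ↔ lossPred s1 s2 g r n (-a*A) w := by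
  have hsh := extendVec_cons_succ a w
  have hx1 : extendVec (n+1) (Fin.cons a w) 1 = a := extendVec_cons_one a w
  have hT : blkSt s1 s2 (g+1) (extendVec (n+1) (Fin.cons a w)) A r
      = blkSt s1 s2 g (extendVec n w) (-a*A) r := by
    have h := blkSt_shift1 (s1 := s1) (s2 := s2) hsh g A r
    rw [hx1] at h
    exact h
  have hxn : extendVec (n+1) (Fin.cons a w) (n+1) = extendVec n w n := hsh n (by omega)
  have hxn1 : extendVec (n+1) (Fin.cons a w) ((n+1)-1) = extendVec n w (n-1) := by
    rw [show (n+1)-1 = (n-1)+1 by omega]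
    exact hsh (n-1) (by omega)
  unfold lossPred
  rw [hT, hxn, hxn1]

lemma lossPred_cons_block (s1 s2 : F → F) (r n : ℕ) (hn : 2 ≤ n) (A a b c : F)
    (w : Fin n → F) :
    lossPred s1 s2 0 (r+1) (n+1+1+1) A (Fin.cons a (Fin.cons b (Fin.cons c w)))
      ↔ lossPred s1 s2 0 r n (blockStep s1 s2 A a b c) w := by
  have h3 : ∀ i, 1 ≤ i →
      extendVec (n+1+1+1) (Fin.cons a (Fin.cons b (Fin.cons c w))) (i+1+1+1)
        = extendVec n w i := by
    intro i hi
    rw [extendVec_cons_succ a _ (i+1+1) (by omega),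
      extendVec_cons_succ b _ (i+1) (by omega),
      extendVec_cons_succ c _ i hi]
  have hsh : ∀ i, 1 ≤ i →
      extendVec (n+1+1+1) (Fin.cons a (Fin.cons b (Fin.cons c w))) (i+3)
        = extendVec n w i := by
    intro i hi
    rw [show i+3 = i+1+1+1 by omega]
    exact h3 i hi
  have hx1 : extendVec (n+1+1+1) (Fin.cons a (Fin.cons b (Fin.cons c w))) 1 = a :=
    extendVec_cons_one _ _
  have hx2 : extendVec (n+1+1+1) (Fin.cons a (Fin.cons b (Fin.cons c w))) 2 = b := by
    rw [show (2:ℕ) = 1+1 by norm_num, extendVec_cons_succ a _ 1 (by omega),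
      extendVec_cons_one]
  have hx3 : extendVec (n+1+1+1) (Fin.cons a (Fin.cons b (Fin.cons c w))) 3 = c := by
    rw [show (3:ℕ) = 1+1+1 by norm_num, extendVec_cons_succ a _ (1+1) (by omega),
      extendVec_cons_succ b _ 1 (by omega), extendVec_cons_one]
  have hT : blkSt s1 s2 0 (extendVec (n+1+1+1)
        (Fin.cons a (Fin.cons b (Fin.cons c w)))) A (r+1)
      = blkSt s1 s2 0 (extendVec n w) (blockStep s1 s2 A a b c) r := by
    have h := blkSt_shift3 (s1 := s1) (s2 := s2) hsh A r
    rw [hx1, hx2, hx3] at h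
    exact h
  have hxn : extendVec (n+1+1+1) (Fin.cons a (Fin.cons b (Fin.cons c w))) (n+1+1+1)
      = extendVec n w n := h3 n (by omega)
  have hxn1 : extendVec (n+1+1+1) (Fin.cons a (Fin.cons b (Fin.cons c w))) ((n+1+1+1)-1)
      = extendVec n w (n-1) := by
    rw [show (n+1+1+1)-1 = (n-1)+1+1+1 by omega]
    exact h3 (n-1) (by omega)
  unfold lossPred
  rw [hT, hxn, hxn1]

lemma card_filter_pi0 (p : Prop) :
    (univ.filter fun _ : Fin 0 → F => p).card = if p then 1 else 0 := by
  by_cases hp : p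
  · rw [if_pos hp, Finset.filter_true_of_mem (fun x _ => hp), Finset.card_univ]
    simp
  · rw [if_neg hp, Finset.card_eq_zero, Finset.filter_eq_empty_iff]
    exact fun x _ => hp

lemma countB (s1 s2 : F → F) : ∀ (r : ℕ) (A : F),
    (univ.filter fun v : Fin (3*r+2) → F => lossPred s1 s2 0 r (3*r+2) A v).card
      = if A = 0 then 0
        else (Fintype.card F ^ 2 - chshCount s1 s2)
            * ((Fintype.card F - 1) * (Fintype.card F ^ 2 - chshCount s1 s2))^r := by
  intro r
  induction r with
  | zero =>
    intro A
    by_cases hA : A = 0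
    · rw [if_pos hA, Finset.card_eq_zero, Finset.filter_eq_empty_iff]
      exact fun v _ => hA ▸ lossPred_zero s1 s2 0 0 _ v
    · rw [if_neg hA, show 3*0+2 = 0+1+1 by norm_num, card_filter_cons2]
      have hev : ∀ a b : F, ∀ w : Fin 0 → F,
          lossPred s1 s2 0 0 (0+1+1) A (Fin.cons a (Fin.cons b w))
            ↔ (A ≠ 0 ∧ ¬(s1 b + s2 (a*A) = b*(a*A))) := by
        intro a b w
        unfold lossPred
        rw [show blkSt s1 s2 0 (extendVec (0+1+1) (Fin.cons a (Fin.cons b w))) A 0 = A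
            from rfl,
          show extendVec (0+1+1) (Fin.cons a (Fin.cons b w)) (0+1+1) = b from rfl,
          show extendVec (0+1+1) (Fin.cons a (Fin.cons b w)) (0+1+1-1) = a from rfl]
      have hcard : ∀ a b : F,
          (univ.filter fun w : Fin 0 → F =>
            lossPred s1 s2 0 0 (0+1+1) A (Fin.cons a (Fin.cons b w))).card
          = if s1 b + s2 (a*A) = b*(a*A) then 0 else 1 := by
        intro a b
        rw [Finset.filter_congr (fun w _ => hev a b w)]
        by_cases hc : s1 b + s2 (a*A) = b*(a*A)
        · rw [if_pos hc, Finset.card_eq_zero, Finset.filter_eq_empty_iff]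
          exact fun w _ h => h.2 hc
        · rw [if_neg hc, Finset.filter_true_of_mem (fun w _ => ⟨hA, hc⟩),
            Finset.card_univ]
          simp
      rw [Finset.sum_congr rfl (fun a _ => Finset.sum_congr rfl (fun b _ => hcard a b)),
        sum_pair s1 s2 hA 1]
      ring
  | succ r ih =>
    intro A
    rw [show 3*(r+1)+2 = (3*r+2)+1+1+1 by ring, card_filter_cons3]
    have hcard : ∀ a b c : F,
        (univ.filter fun w : Fin (3*r+2) → F =>
          lossPred s1 s2 0 (r+1) ((3*r+2)+1+1+1) A
            (Fin.cons a (Fin.cons b (Fin.cons c w)))).card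
        = if blockStep s1 s2 A a b c = 0 then 0
          else (Fintype.card F ^ 2 - chshCount s1 s2)
            * ((Fintype.card F - 1) * (Fintype.card F ^ 2 - chshCount s1 s2))^r := by
      intro a b c
      rw [Finset.filter_congr
        (fun w _ => lossPred_cons_block s1 s2 r (3*r+2) (by omega) A a b c w)]
      exact ih (blockStep s1 s2 A a b c)
    rw [Finset.sum_congr rfl (fun a _ => Finset.sum_congr rfl (fun b _ =>
      Finset.sum_congr rfl (fun c _ => hcard a b c))), sum_blockStep]
    by_cases hA : A = 0
    · rw [if_pos hA, if_pos hA]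
    · rw [if_neg hA, if_neg hA]
      ring

lemma countG (s1 s2 : F → F) : ∀ (g r : ℕ) (A : F),
    (univ.filter fun v : Fin (g+(3*r+2)) → F =>
        lossPred s1 s2 g r (g+(3*r+2)) A v).card
      = if A = 0 then 0
        else (Fintype.card F - 1)^g * ((Fintype.card F ^ 2 - chshCount s1 s2)
            * ((Fintype.card F - 1) * (Fintype.card F ^ 2 - chshCount s1 s2))^r) := by
  intro g
  induction g with
  | zero =>
    intro r A
    rw [show 0+(3*r+2) = 3*r+2 by omega, countB s1 s2 r A]
    by_cases hA : A = 0
    · rw [if_pos hA, if_pos hA]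
    · rw [if_neg hA, if_neg hA]
      ring
  | succ g ih =>
    intro r A
    rw [show (g+1)+(3*r+2) = (g+(3*r+2))+1 by ring, card_filter_cons]
    have hcard : ∀ a : F,
        (univ.filter fun w : Fin (g+(3*r+2)) → F =>
          lossPred s1 s2 (g+1) r ((g+(3*r+2))+1) A (Fin.cons a w)).card
        = if -a*A = 0 then 0
          else (Fintype.card F - 1)^g * ((Fintype.card F ^ 2 - chshCount s1 s2)
            * ((Fintype.card F - 1) * (Fintype.card F ^ 2 - chshCount s1 s2))^r) := by
      intro a
      rw [Finset.filter_congr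
        (fun w _ => lossPred_cons_gap s1 s2 g r (g+(3*r+2)) (by omega) A a w)]
      exact ih r (-a*A)
    rw [Finset.sum_congr rfl (fun a _ => hcard a), sum_gap]
    by_cases hA : A = 0
    · rw [if_pos hA, if_pos hA]
    · rw [if_neg hA, if_neg hA]
      ring

end Count2


section Assemble
set_option linter.unusedSectionVars false
open scoped Classical
variable {F : Type*} [Field F] [Fintype F] [DecidableEq F]

lemma not_winP_iff (s1 s2 : F → F) {m g r : ℕ} (hm : 3 ≤ m)
    (hg : (m-3) % 3 = g) (hr : (m-3) / 3 = r) (d : Bool) (v : Fin (m-1) → F) :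
    (¬ winP m (Strat s1 s2 m) d v) ↔ lossPred s1 s2 g r (m-1) (bitF F d) v := by
  simp only [winP]
  rw [win_iff_s10 s1 s2 hm hg hr (bitF F d) (extendVec (m-1) v)]
  unfold lossPred
  rw [show (m-1)-1 = m-2 by omega]
  tauto

lemma card_filter_bool {X : Type*} [Fintype X] (P : Bool × X → Prop) [DecidablePred P]
    [DecidablePred fun x : X => P (true, x)] [DecidablePred fun x : X => P (false, x)] :
    (univ.filter P).card
      = (univ.filter fun x : X => P (true, x)).card
        + (univ.filter fun x : X => P (false, x)).card := by
  rw [Finset.card_filter, ← Finset.univ_product_univ, Finset.sum_product,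
    Fintype.sum_bool, Finset.card_filter, Finset.card_filter]
  congr 1 <;> (apply Finset.sum_congr rfl; intro x _; congr)

end Assemble

lemma card_filter_insensitive {α : Type*} {s : Finset α} {p q : α → Prop}
    [DecidablePred p] [DecidablePred q] (h : ∀ x, p x ↔ q x) :
    (s.filter p).card = (s.filter q).card := by
  rw [Finset.filter_congr (fun x _ => h x)]

/-- for every m ≥ 3, Alice's maximal cheating probability in the m-round
F_Q protocol satisfies g_m ≥ 1 − (1/2)·((1 − 1/Q)(1 − ω(CHSH_Q)))^⌊(m−1)/3⌋. -/
theorem main_attack_bound (F : Type*) [Field F] [Fintype F] [DecidableEq F]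
    (m : ℕ) (hm : 3 ≤ m) :
    gP F m ≥ 1 - (1 / 2) *
      ((1 - 1 / (Fintype.card F : ℝ)) * (1 - omegaCHSH F)) ^ ((m - 1) / 3) := by
  classical
  rw [ge_iff_le]
  -- an optimal CHSH strategy
  obtain ⟨⟨s1, s2⟩, homega⟩ :
      ∃ s : (F → F) × (F → F), omegaCHSH F = chshProb F s.1 s.2 := by
    have hset : {p : ℝ | ∃ s1 s2 : F → F, p = chshProb F s1 s2}
        = Set.range (fun s : (F → F) × (F → F) => chshProb F s.1 s.2) := by
      ext p
      constructor
      · rintro ⟨s1, s2, rfl⟩; exact ⟨(s1, s2), rfl⟩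
      · rintro ⟨⟨s1, s2⟩, rfl⟩; exact ⟨s1, s2, rfl⟩
    have hfin : {p : ℝ | ∃ s1 s2 : F → F, p = chshProb F s1 s2}.Finite := by
      rw [hset]; exact Set.finite_range _
    have hne : {p : ℝ | ∃ s1 s2 : F → F, p = chshProb F s1 s2}.Nonempty :=
      ⟨chshProb F id id, id, id, rfl⟩
    obtain ⟨t1, t2, h⟩ := hne.csSup_mem hfin
    exact ⟨(t1, t2), h⟩
  obtain ⟨g, hg⟩ : ∃ g, (m-3) % 3 = g := ⟨_, rfl⟩
  obtain ⟨r, hr⟩ : ∃ r, (m-3) / 3 = r := ⟨_, rfl⟩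
  have hg2 : g ≤ 2 := by omega
  have hn : m - 1 = g + (3*r + 2) := by omega
  set S := Strat s1 s2 m with hS
  have hvalid : ValidStrategy S := strat_valid s1 s2 hm
  obtain ⟨Q, hQdef⟩ : ∃ Q, Fintype.card F = Q := ⟨_, rfl⟩
  have hQ2 : 2 ≤ Q := hQdef ▸ Fintype.one_lt_card
  obtain ⟨C, hCdef⟩ : ∃ C, chshCount s1 s2 = C := ⟨_, rfl⟩
  have hC : C ≤ Q^2 := hQdef ▸ hCdef ▸ chshCount_le s1 s2
  have hQR : (0:ℝ) < (Q:ℝ) := by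
    have : 0 < Q := by omega
    exact_mod_cast this
  -- counting the losing pairs
  have hlosscount : (univ.filter fun p : Bool × (Fin (m-1) → F) =>
      ¬ winP m S p.1 p.2).card
      = (Q - 1)^g * ((Q^2 - C) * ((Q - 1) * (Q^2 - C))^r) := by
    have htrue : (univ.filter fun v : Fin (m-1) → F => ¬ winP m S true v).card
        = (Q - 1)^g * ((Q^2 - C) * ((Q - 1) * (Q^2 - C))^r) := by
      rw [Finset.filter_congr (fun v _ => not_winP_iff s1 s2 hm hg hr true v)]
      rw [show bitF F true = 1 from rfl]
      rw [hn, countG s1 s2 g r 1, if_neg one_ne_zero, hQdef, hCdef]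
    have hfalse : (univ.filter fun v : Fin (m-1) → F => ¬ winP m S false v).card = 0 := by
      rw [Finset.filter_congr (fun v _ => not_winP_iff s1 s2 hm hg hr false v)]
      rw [Finset.card_eq_zero, Finset.filter_eq_empty_iff]
      intro v _
      rw [show bitF F false = 0 from rfl]
      exact lossPred_zero s1 s2 g r (m-1) v
    rw [card_filter_bool (fun p : Bool × (Fin (m-1) → F) => ¬ winP m S p.1 p.2),
      htrue, hfalse, Nat.add_zero]
  have hsplit := Finset.card_filter_add_card_filter_not
    (s := (univ : Finset (Bool × (Fin (m-1) → F))))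
    (p := fun p => winP m S p.1 p.2)
  have hTcard : (univ : Finset (Bool × (Fin (m-1) → F))).card = 2 * Q^(m-1) := by
    rw [Finset.card_univ, Fintype.card_prod, Fintype.card_bool, Fintype.card_fun,
      Fintype.card_fin, hQdef]
  have hsplit2 : (univ.filter fun p : Bool × (Fin (m-1) → F) => winP m S p.1 p.2).card
      + (univ.filter fun p : Bool × (Fin (m-1) → F) => ¬ winP m S p.1 p.2).card
      = 2 * Q^(m-1) := by
    rw [← hTcard, ← hsplit]
  -- real-number values
  have homega2 : omegaCHSH F = (C:ℝ)/(Q:ℝ)^2 := by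
    rw [homega]
    have hcc : (univ.filter fun p : F × F => s1 p.1 + s2 p.2 = p.1 * p.2).card = C := hCdef
    show ((univ.filter fun p : F × F => s1 p.1 + s2 p.2 = p.1 * p.2).card : ℝ)
        / (Fintype.card F : ℝ)^2 = (C:ℝ)/(Q:ℝ)^2
    rw [hcc, hQdef]
  have hq1 : ((Q - 1 : ℕ) : ℝ) = (Q:ℝ) - 1 := by
    rw [Nat.cast_sub (by omega)]; norm_num
  have hc2 : ((Q^2 - C : ℕ) : ℝ) = (Q:ℝ)^2 - (C:ℝ) := by
    rw [Nat.cast_sub hC]; push_cast; ring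
  have hCR : (0:ℝ) ≤ (C:ℝ) := Nat.cast_nonneg C
  have hc2R : (0:ℝ) ≤ (Q:ℝ)^2 - (C:ℝ) := by
    have : (C:ℝ) ≤ ((Q^2 : ℕ) : ℝ) := Nat.cast_le.mpr hC
    push_cast at this
    linarith
  have hq1R : (0:ℝ) ≤ (Q:ℝ) - 1 := by linarith
  have hY : (0:ℝ) ≤ ((Q:ℝ)-1) * ((Q:ℝ)^2 - (C:ℝ)) := mul_nonneg hq1R hc2R
  have hXval : (1 - 1/(Q:ℝ)) * (1 - omegaCHSH F)
      = (((Q:ℝ)-1) * ((Q:ℝ)^2 - (C:ℝ)))/(Q:ℝ)^3 := by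
    rw [homega2]
    have hq : (1 - 1/(Q:ℝ)) = ((Q:ℝ)-1)/(Q:ℝ) := by field_simp
    have hcc : (1 - (C:ℝ)/(Q:ℝ)^2) = ((Q:ℝ)^2-(C:ℝ))/(Q:ℝ)^2 := by field_simp
    rw [hq, hcc, div_mul_div_comm]
    congr 1
    ring
  -- the loss bound in ℝ
  have hLbound : ((Q:ℝ)-1)^g * (((Q:ℝ)^2 - (C:ℝ))
        * (((Q:ℝ)-1) * ((Q:ℝ)^2 - (C:ℝ)))^r)
      ≤ (Q:ℝ)^(m-1) * ((1 - 1/(Q:ℝ)) * (1 - omegaCHSH F))^((m-1)/3) := by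
    rw [hXval]
    have hQne : (Q:ℝ) ≠ 0 := ne_of_gt hQR
    interval_cases g
    · rw [show (m-1)/3 = r by omega, show m-1 = 3*r+2 by omega]
      have hR : (Q:ℝ)^(3*r+2) * ((((Q:ℝ)-1) * ((Q:ℝ)^2 - (C:ℝ)))/(Q:ℝ)^3)^r
          = (Q:ℝ)^2 * (((Q:ℝ)-1) * ((Q:ℝ)^2 - (C:ℝ)))^r := by
        rw [div_pow]
        field_simp
        ring
      rw [hR, pow_zero, one_mul]
      exact mul_le_mul_of_nonneg_right (by nlinarith) (pow_nonneg hY r)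
    · rw [show (m-1)/3 = r+1 by omega, show m-1 = 3*r+3 by omega]
      have hR : (Q:ℝ)^(3*r+3) * ((((Q:ℝ)-1) * ((Q:ℝ)^2 - (C:ℝ)))/(Q:ℝ)^3)^(r+1)
          = (((Q:ℝ)-1) * ((Q:ℝ)^2 - (C:ℝ)))^(r+1) := by
        rw [div_pow]
        field_simp
        ring
      rw [hR]
      apply le_of_eq
      ring
    · rw [show (m-1)/3 = r+1 by omega, show m-1 = 3*r+4 by omega]
      have hR : (Q:ℝ)^(3*r+4) * ((((Q:ℝ)-1) * ((Q:ℝ)^2 - (C:ℝ)))/(Q:ℝ)^3)^(r+1)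
          = (Q:ℝ) * (((Q:ℝ)-1) * ((Q:ℝ)^2 - (C:ℝ)))^(r+1) := by
        rw [div_pow]
        field_simp
        ring
      have hL : ((Q:ℝ)-1)^2 * (((Q:ℝ)^2 - (C:ℝ))
            * (((Q:ℝ)-1) * ((Q:ℝ)^2 - (C:ℝ)))^r)
          = ((Q:ℝ)-1) * (((Q:ℝ)-1) * ((Q:ℝ)^2 - (C:ℝ)))^(r+1) := by
        ring
      rw [hR, hL]
      exact mul_le_mul_of_nonneg_right (by linarith) (pow_nonneg hY (r+1))
  -- the winning count in ℝ
  have hle : (Q - 1)^g * ((Q^2 - C) * ((Q - 1) * (Q^2 - C))^r) ≤ 2 * Q^(m-1) := by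
    omega
  have hwin : ((univ.filter fun p : Bool × (Fin (m-1) → F) => winP m S p.1 p.2).card : ℝ)
      = 2*(Q:ℝ)^(m-1)
        - ((Q:ℝ)-1)^g * (((Q:ℝ)^2 - (C:ℝ)) * (((Q:ℝ)-1) * ((Q:ℝ)^2 - (C:ℝ)))^r) := by
    have hnat : (univ.filter fun p : Bool × (Fin (m-1) → F) => winP m S p.1 p.2).card
        = 2 * Q^(m-1) - (Q - 1)^g * ((Q^2 - C) * ((Q - 1) * (Q^2 - C))^r) := by
      omega
    rw [hnat, Nat.cast_sub hle]
    push_cast [hq1, hc2]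
    ring
  -- probability bound
  have hTpos : (0:ℝ) < 2 * (Q:ℝ)^(m-1) := by positivity
  have hpv : probP F m S
      = ((univ.filter fun p : Bool × (Fin (m-1) → F) => winP m S p.1 p.2).card : ℝ)
        / (2 * (Q:ℝ)^(m-1)) := by
    rw [probP]
    congr 1
    rw [Fintype.card_prod, Fintype.card_bool, Fintype.card_fun, Fintype.card_fin, hQdef]
    push_cast
    ring
  have hprob_ge : 1 - (1/2) * ((1 - 1/(Q:ℝ)) * (1 - omegaCHSH F))^((m-1)/3)
      ≤ probP F m S := by
    have key : (1 - (1/2) * ((1 - 1/(Q:ℝ)) * (1 - omegaCHSH F))^((m-1)/3))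
          * (2 * (Q:ℝ)^(m-1))
        = 2*(Q:ℝ)^(m-1)
          - (Q:ℝ)^(m-1) * ((1 - 1/(Q:ℝ)) * (1 - omegaCHSH F))^((m-1)/3) := by
      ring
    rw [hpv, hwin, le_div_iff₀ hTpos, key]
    linarith [hLbound]
  -- conclude via sSup
  have hbdd : BddAbove {p : ℝ | ∃ S, ValidStrategy S ∧ p = probP F m S} := by
    refine ⟨1, ?_⟩
    rintro p ⟨S', _, rfl⟩
    rw [probP]
    apply div_le_one_of_le₀
    · exact_mod_cast le_trans (Finset.card_filter_le _ _) (le_of_eq Finset.card_univ)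
    · positivity
  have hgle : probP F m S ≤ gP F m := le_csSup hbdd ⟨S, hvalid, rfl⟩
  rw [← hQdef] at hprob_ge
  linarith
end
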